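/- arXiv:2112.09313 — 6 statements merged into one kernel-verified Lean document; each statement's English description precedes it below -/
import Mathlib

section
/- The bias of the augmented inverse-probability-weighted (AIPW) functional with working models (π, m₁, m₀) admits the product decomposition: E[ m₁(X) − m₀(X) + A·(Y−m₁(X))/π(X) − (1−A)·(Y−m₀(X))/(1−π(X)) ] − E[Y¹ − Y⁰] = E[ (e(X)/π(X) − 1)·(μ₁(X) − m₁(X)) ] − E[ ((1−e(X))/(1−π(X)) − 1)·(μ₀(X) − m₀(X)) ]. -/
open MeasureTheory ProbabilityTheory

private lemma aipw_aux_integrable {Ω : Type*} [MeasurableSpace Ω] {P : Measure Ω}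
    [IsFiniteMeasure P] {f : Ω → ℝ} (hf : Measurable f) {C : ℝ}
    (h : ∀ᵐ ω ∂P, |f ω| ≤ C) : Integrable f P :=
  ⟨hf.aestronglyMeasurable,
    HasFiniteIntegral.of_bounded (C := C) (by simpa [Real.norm_eq_abs] using h)⟩

private lemma aipw_abs_mul_le {a b A B : ℝ} (ha : |a| ≤ A) (hb : |b| ≤ B) : |a * b| ≤ A * B := by
  rw [abs_mul]
  exact mul_le_mul ha hb (abs_nonneg _) (le_trans (abs_nonneg _) ha)

private lemma aipw_abs_div_le {a b A ε : ℝ} (ha : |a| ≤ A) (hε : 0 < ε) (hb : ε ≤ b) :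
    |a / b| ≤ A / ε := by
  rw [abs_div, abs_of_pos (lt_of_lt_of_le hε hb)]
  exact div_le_div₀ (le_trans (abs_nonneg _) ha) ha hε hb

private lemma aipw_abs_sub_le {a b A B : ℝ} (ha : |a| ≤ A) (hb : |b| ≤ B) : |a - b| ≤ A + B :=
  (abs_sub a b).trans (add_le_add ha hb)

/-- **Product bias decomposition of the AIPW functional.**
With working propensity score `π` and working outcome regressions `m₁, m₀`, the bias of the
augmented IPW functional for the ATE decomposes as a product of model errors:
`E[AIPW] − E[Y¹ − Y⁰] = E[(e/π − 1)(μ₁ − m₁)] − E[((1−e)/(1−π) − 1)(μ₀ − m₀)]`. -/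
theorem aipw_bias_decomposition
    {Ω : Type*} [MeasurableSpace Ω] (P : Measure Ω) [IsProbabilityMeasure P]
    {p : ℕ} (X : Ω → (Fin p → ℝ)) (A : Ω → ℝ) (Y1 Y0 Y : Ω → ℝ)
    (e μ1 μ0 π m1 m0 : (Fin p → ℝ) → ℝ) (ε : ℝ)
    (hX : Measurable X) (hA : Measurable A) (hA01 : ∀ ω, A ω = 0 ∨ A ω = 1)
    (hY1 : Measurable Y1) (hY0 : Measurable Y0)
    (hY1b : ∃ C, ∀ ω, |Y1 ω| ≤ C) (hY0b : ∃ C, ∀ ω, |Y0 ω| ≤ C)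
    (hcons : ∀ ω, Y ω = A ω * Y1 ω + (1 - A ω) * Y0 ω)
    (he : Measurable e)
    (heX : (fun ω => e (X ω)) =ᵐ[P] P[A | MeasurableSpace.comap X inferInstance])
    (hε : 0 < ε) (hε' : ε < 1 / 2)
    (hpos : ∀ᵐ ω ∂P, ε ≤ e (X ω) ∧ e (X ω) ≤ 1 - ε)
    (hig1 : P[fun ω => A ω * Y1 ω | MeasurableSpace.comap X inferInstance]
      =ᵐ[P] fun ω => e (X ω) * (P[Y1 | MeasurableSpace.comap X inferInstance]) ω)
    (hig0 : P[fun ω => (1 - A ω) * Y0 ω | MeasurableSpace.comap X inferInstance]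
      =ᵐ[P] fun ω => (1 - e (X ω)) * (P[Y0 | MeasurableSpace.comap X inferInstance]) ω)
    (hμ1 : Measurable μ1) (hμ0 : Measurable μ0)
    (hμ1b : ∃ C, ∀ x, |μ1 x| ≤ C) (hμ0b : ∃ C, ∀ x, |μ0 x| ≤ C)
    (hor1 : P[fun ω => A ω * (Y ω - μ1 (X ω)) | MeasurableSpace.comap X inferInstance]
      =ᵐ[P] fun _ => (0 : ℝ))
    (hor0 : P[fun ω => (1 - A ω) * (Y ω - μ0 (X ω)) | MeasurableSpace.comap X inferInstance]
      =ᵐ[P] fun _ => (0 : ℝ))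
    (hπ : Measurable π) (hπpos : ∀ x, ε ≤ π x ∧ π x ≤ 1 - ε)
    (hm1 : Measurable m1) (hm0 : Measurable m0)
    (hm1b : ∃ C, ∀ x, |m1 x| ≤ C) (hm0b : ∃ C, ∀ x, |m0 x| ≤ C) :
    (∫ ω, (m1 (X ω) - m0 (X ω) + A ω * (Y ω - m1 (X ω)) / π (X ω)
          - (1 - A ω) * (Y ω - m0 (X ω)) / (1 - π (X ω))) ∂P)
        - ∫ ω, (Y1 ω - Y0 ω) ∂P
      = (∫ ω, (e (X ω) / π (X ω) - 1) * (μ1 (X ω) - m1 (X ω)) ∂P)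
        - ∫ ω, ((1 - e (X ω)) / (1 - π (X ω)) - 1) * (μ0 (X ω) - m0 (X ω)) ∂P := by
  classical
  obtain ⟨C1, hC1⟩ := hY1b
  obtain ⟨C0, hC0⟩ := hY0b
  obtain ⟨D1, hD1⟩ := hμ1b
  obtain ⟨D0, hD0⟩ := hμ0b
  obtain ⟨E1, hE1⟩ := hm1b
  obtain ⟨E0, hE0⟩ := hm0b
  have hmG : MeasurableSpace.comap X MeasurableSpace.pi ≤ ‹MeasurableSpace Ω› := hX.comap_le
  have hXG : Measurable[MeasurableSpace.comap X MeasurableSpace.pi] X :=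
    Measurable.of_comap_le le_rfl
  -- basic bounds
  have hA1 : ∀ ω, |A ω| ≤ 1 := fun ω => by rcases hA01 ω with h | h <;> simp [h]
  have h1A : ∀ ω, |1 - A ω| ≤ 1 := fun ω => by rcases hA01 ω with h | h <;> simp [h]
  have hYm : Measurable Y := by
    have : Y = fun ω => A ω * Y1 ω + (1 - A ω) * Y0 ω := funext hcons
    rw [this]
    exact (hA.mul hY1).add ((measurable_const.sub hA).mul hY0)
  have hYb : ∀ ω, |Y ω| ≤ max C1 C0 := fun ω => by
    rcases hA01 ω with h | h
    · have : Y ω = Y0 ω := by rw [hcons ω, h]; ring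
      rw [this]; exact le_trans (hC0 ω) (le_max_right _ _)
    · have : Y ω = Y1 ω := by rw [hcons ω, h]; ring
      rw [this]; exact le_trans (hC1 ω) (le_max_left _ _)
  have hπpos' : ∀ x, (0 : ℝ) < π x := fun x => lt_of_lt_of_le hε (hπpos x).1
  have hπpos'' : ∀ x, ε ≤ 1 - π x := fun x => by linarith [(hπpos x).2]
  -- integrability facts
  have hIA : Integrable A P := aipw_aux_integrable hA (Filter.Eventually.of_forall hA1)
  have hI1A : Integrable (fun ω => 1 - A ω) P :=
    aipw_aux_integrable (measurable_const.sub hA) (Filter.Eventually.of_forall h1A)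
  have hIY1 : Integrable Y1 P := aipw_aux_integrable hY1 (Filter.Eventually.of_forall hC1)
  have hIY0 : Integrable Y0 P := aipw_aux_integrable hY0 (Filter.Eventually.of_forall hC0)
  have hIm1X : Integrable (fun ω => m1 (X ω)) P :=
    aipw_aux_integrable (hm1.comp hX) (Filter.Eventually.of_forall fun ω => hE1 _)
  have hIm0X : Integrable (fun ω => m0 (X ω)) P :=
    aipw_aux_integrable (hm0.comp hX) (Filter.Eventually.of_forall fun ω => hE0 _)
  have hIμ1X : Integrable (fun ω => μ1 (X ω)) P :=
    aipw_aux_integrable (hμ1.comp hX) (Filter.Eventually.of_forall fun ω => hD1 _)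
  have hIμ0X : Integrable (fun ω => μ0 (X ω)) P :=
    aipw_aux_integrable (hμ0.comp hX) (Filter.Eventually.of_forall fun ω => hD0 _)
  have hIg1 : Integrable (fun ω => A ω * (Y ω - μ1 (X ω))) P := by
    refine aipw_aux_integrable (C := max C1 C0 + D1) (hA.mul (hYm.sub (hμ1.comp hX)))
      (Filter.Eventually.of_forall fun ω => ?_)
    simpa using aipw_abs_mul_le (hA1 ω) (aipw_abs_sub_le (hYb ω) (hD1 (X ω)))
  have hIg0 : Integrable (fun ω => (1 - A ω) * (Y ω - μ0 (X ω))) P := by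
    refine aipw_aux_integrable (C := max C1 C0 + D0) ((measurable_const.sub hA).mul (hYm.sub (hμ0.comp hX)))
      (Filter.Eventually.of_forall fun ω => ?_)
    simpa using aipw_abs_mul_le (h1A ω) (aipw_abs_sub_le (hYb ω) (hD0 (X ω)))
  have hIh1 : Integrable (fun ω => (μ1 (X ω) - m1 (X ω)) * A ω) P := by
    refine aipw_aux_integrable (C := D1 + E1) (((hμ1.comp hX).sub (hm1.comp hX)).mul hA)
      (Filter.Eventually.of_forall fun ω => ?_)
    simpa using aipw_abs_mul_le (aipw_abs_sub_le (hD1 (X ω)) (hE1 (X ω))) (hA1 ω)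
  have hIh0 : Integrable (fun ω => (μ0 (X ω) - m0 (X ω)) * (1 - A ω)) P := by
    refine aipw_aux_integrable (C := D0 + E0) (((hμ0.comp hX).sub (hm0.comp hX)).mul (measurable_const.sub hA))
      (Filter.Eventually.of_forall fun ω => ?_)
    simpa using aipw_abs_mul_le (aipw_abs_sub_le (hD0 (X ω)) (hE0 (X ω))) (h1A ω)
  have hIμA : Integrable (fun ω => μ1 (X ω) * A ω) P := by
    refine aipw_aux_integrable (C := D1) ((hμ1.comp hX).mul hA)
      (Filter.Eventually.of_forall fun ω => ?_)
    simpa using aipw_abs_mul_le (hD1 (X ω)) (hA1 ω)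
  have hIμA0 : Integrable (fun ω => μ0 (X ω) * (1 - A ω)) P := by
    refine aipw_aux_integrable (C := D0) ((hμ0.comp hX).mul (measurable_const.sub hA))
      (Filter.Eventually.of_forall fun ω => ?_)
    simpa using aipw_abs_mul_le (hD0 (X ω)) (h1A ω)
  have hIG1 : Integrable (fun ω => A ω * (Y ω - m1 (X ω))) P := by
    refine aipw_aux_integrable (C := max C1 C0 + E1) (hA.mul (hYm.sub (hm1.comp hX)))
      (Filter.Eventually.of_forall fun ω => ?_)
    simpa using aipw_abs_mul_le (hA1 ω) (aipw_abs_sub_le (hYb ω) (hE1 (X ω)))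
  have hIG0 : Integrable (fun ω => (1 - A ω) * (Y ω - m0 (X ω))) P := by
    refine aipw_aux_integrable (C := max C1 C0 + E0) ((measurable_const.sub hA).mul (hYm.sub (hm0.comp hX)))
      (Filter.Eventually.of_forall fun ω => ?_)
    simpa using aipw_abs_mul_le (h1A ω) (aipw_abs_sub_le (hYb ω) (hE0 (X ω)))
  have hIfG1 : Integrable ((fun ω => (π (X ω))⁻¹) * fun ω => A ω * (Y ω - m1 (X ω))) P := by
    refine aipw_aux_integrable (C := 1 / ε * (max C1 C0 + E1)) (((hπ.comp hX).inv).mul (hA.mul (hYm.sub (hm1.comp hX))))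
      (Filter.Eventually.of_forall fun ω => ?_)
    have h1 : |(π (X ω))⁻¹| ≤ 1 / ε := by
      rw [inv_eq_one_div]
      exact aipw_abs_div_le (by norm_num) hε (hπpos (X ω)).1
    exact aipw_abs_mul_le h1
      (by simpa using aipw_abs_mul_le (hA1 ω) (aipw_abs_sub_le (hYb ω) (hE1 (X ω))))
  have hIfG0 : Integrable
      ((fun ω => (1 - π (X ω))⁻¹) * fun ω => (1 - A ω) * (Y ω - m0 (X ω))) P := by
    refine aipw_aux_integrable (C := 1 / ε * (max C1 C0 + E0))
      (((measurable_const.sub (hπ.comp hX)).inv).mul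
        ((measurable_const.sub hA).mul (hYm.sub (hm0.comp hX))))
      (Filter.Eventually.of_forall fun ω => ?_)
    have h1 : |(1 - π (X ω))⁻¹| ≤ 1 / ε := by
      rw [inv_eq_one_div]
      exact aipw_abs_div_le (by norm_num) hε (hπpos'' (X ω))
    exact aipw_abs_mul_le h1
      (by simpa using aipw_abs_mul_le (h1A ω) (aipw_abs_sub_le (hYb ω) (hE0 (X ω))))
  have hIT1 : Integrable (fun ω => A ω * (Y ω - m1 (X ω)) / π (X ω)) P := by
    refine aipw_aux_integrable (C := (max C1 C0 + E1) / ε) ((hA.mul (hYm.sub (hm1.comp hX))).div (hπ.comp hX))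
      (Filter.Eventually.of_forall fun ω => ?_)
    exact aipw_abs_div_le
      (by simpa using aipw_abs_mul_le (hA1 ω) (aipw_abs_sub_le (hYb ω) (hE1 (X ω))))
      hε (hπpos (X ω)).1
  have hIT0 : Integrable (fun ω => (1 - A ω) * (Y ω - m0 (X ω)) / (1 - π (X ω))) P := by
    refine aipw_aux_integrable (C := (max C1 C0 + E0) / ε)
      (((measurable_const.sub hA).mul (hYm.sub (hm0.comp hX))).div
        (measurable_const.sub (hπ.comp hX)))
      (Filter.Eventually.of_forall fun ω => ?_)
    exact aipw_abs_div_le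
      (by simpa using aipw_abs_mul_le (h1A ω) (aipw_abs_sub_le (hYb ω) (hE0 (X ω))))
      hε (hπpos'' (X ω))
  have hIeπ : Integrable (fun ω => e (X ω) / π (X ω) * (μ1 (X ω) - m1 (X ω))) P := by
    refine aipw_aux_integrable (C := 1 / ε * (D1 + E1))
      (((he.comp hX).div (hπ.comp hX)).mul ((hμ1.comp hX).sub (hm1.comp hX)))
      (hpos.mono fun ω hp => ?_)
    have h1 : |e (X ω)| ≤ 1 := abs_le.2 ⟨by linarith [hp.1], by linarith [hp.2]⟩
    exact aipw_abs_mul_le (aipw_abs_div_le h1 hε (hπpos (X ω)).1)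
      (aipw_abs_sub_le (hD1 (X ω)) (hE1 (X ω)))
  have hIeπ0 : Integrable (fun ω => (1 - e (X ω)) / (1 - π (X ω)) * (μ0 (X ω) - m0 (X ω))) P := by
    refine aipw_aux_integrable (C := 1 / ε * (D0 + E0))
      (((measurable_const.sub (he.comp hX)).div (measurable_const.sub (hπ.comp hX))).mul
        ((hμ0.comp hX).sub (hm0.comp hX)))
      (hpos.mono fun ω hp => ?_)
    have h1 : |1 - e (X ω)| ≤ 1 := abs_le.2 ⟨by linarith [hp.2], by linarith [hp.1]⟩
    exact aipw_abs_mul_le (aipw_abs_div_le h1 hε (hπpos'' (X ω)))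
      (aipw_abs_sub_le (hD0 (X ω)) (hE0 (X ω)))
  -- conditional expectation of (1 - A)
  have hcA : P[fun ω => 1 - A ω|(MeasurableSpace.comap X MeasurableSpace.pi)] =ᵐ[P] fun ω => 1 - e (X ω) := by
    have h1 : P[(fun _ : Ω => (1 : ℝ)) - A|(MeasurableSpace.comap X MeasurableSpace.pi)] =ᵐ[P]
        P[fun _ : Ω => (1 : ℝ)|(MeasurableSpace.comap X MeasurableSpace.pi)] - P[A|(MeasurableSpace.comap X MeasurableSpace.pi)] := condExp_sub (integrable_const 1) hIA _
    refine h1.trans ?_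
    have h2 := condExp_const (μ := P) hmG (1 : ℝ)
    filter_upwards [heX] with ω h
    rw [Pi.sub_apply, h2, ← h]
  -- conditional expectations of the augmentation terms
  have hB1 : P[fun ω => A ω * (Y ω - m1 (X ω))|(MeasurableSpace.comap X MeasurableSpace.pi)]
      =ᵐ[P] fun ω => e (X ω) * (μ1 (X ω) - m1 (X ω)) := by
    have hsplit : (fun ω => A ω * (Y ω - m1 (X ω)))
        = (fun ω => A ω * (Y ω - μ1 (X ω))) + fun ω => (μ1 (X ω) - m1 (X ω)) * A ω := by
      funext ω; simp only [Pi.add_apply]; ring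
    rw [hsplit]
    refine (condExp_add hIg1 hIh1 _).trans ?_
    have hmul : P[fun ω => (μ1 (X ω) - m1 (X ω)) * A ω|(MeasurableSpace.comap X MeasurableSpace.pi)]
        =ᵐ[P] fun ω => (μ1 (X ω) - m1 (X ω)) * (P[A|(MeasurableSpace.comap X MeasurableSpace.pi)]) ω :=
      condExp_mul_of_stronglyMeasurable_left (m := (MeasurableSpace.comap X MeasurableSpace.pi)) (μ := P)
        (f := fun ω => μ1 (X ω) - m1 (X ω)) (g := A)
        (((hμ1.comp hXG).sub (hm1.comp hXG)).stronglyMeasurable) hIh1 hIA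
    filter_upwards [hor1, hmul, heX] with ω h1 h2 h3
    simp only [Pi.add_apply, h1, h2, ← h3]
    ring
  have hB0 : P[fun ω => (1 - A ω) * (Y ω - m0 (X ω))|(MeasurableSpace.comap X MeasurableSpace.pi)]
      =ᵐ[P] fun ω => (1 - e (X ω)) * (μ0 (X ω) - m0 (X ω)) := by
    have hsplit : (fun ω => (1 - A ω) * (Y ω - m0 (X ω)))
        = (fun ω => (1 - A ω) * (Y ω - μ0 (X ω)))
          + fun ω => (μ0 (X ω) - m0 (X ω)) * (1 - A ω) := by
      funext ω; simp only [Pi.add_apply]; ring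
    rw [hsplit]
    refine (condExp_add hIg0 hIh0 _).trans ?_
    have hmul : P[fun ω => (μ0 (X ω) - m0 (X ω)) * (1 - A ω)|(MeasurableSpace.comap X MeasurableSpace.pi)]
        =ᵐ[P] fun ω => (μ0 (X ω) - m0 (X ω)) * (P[fun ω => 1 - A ω|(MeasurableSpace.comap X MeasurableSpace.pi)]) ω :=
      condExp_mul_of_stronglyMeasurable_left (m := (MeasurableSpace.comap X MeasurableSpace.pi)) (μ := P)
        (f := fun ω => μ0 (X ω) - m0 (X ω)) (g := fun ω => 1 - A ω)
        (((hμ0.comp hXG).sub (hm0.comp hXG)).stronglyMeasurable) hIh0 hI1A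
    filter_upwards [hor0, hmul, hcA] with ω h1 h2 h3
    simp only [Pi.add_apply, h1, h2, h3]
    ring
  -- the weighted augmentation integrals
  have hC1' : ∫ ω, A ω * (Y ω - m1 (X ω)) / π (X ω) ∂P
      = ∫ ω, e (X ω) / π (X ω) * (μ1 (X ω) - m1 (X ω)) ∂P := by
    have hw : StronglyMeasurable[(MeasurableSpace.comap X MeasurableSpace.pi)] fun ω => (π (X ω))⁻¹ :=
      ((hπ.comp hXG).inv).stronglyMeasurable
    have hpull := condExp_mul_of_stronglyMeasurable_left (m := (MeasurableSpace.comap X MeasurableSpace.pi)) (μ := P)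
      (f := fun ω => (π (X ω))⁻¹) (g := fun ω => A ω * (Y ω - m1 (X ω))) hw hIfG1 hIG1
    calc ∫ ω, A ω * (Y ω - m1 (X ω)) / π (X ω) ∂P
        = ∫ ω, ((fun ω => (π (X ω))⁻¹) * fun ω => A ω * (Y ω - m1 (X ω))) ω ∂P := by
          refine integral_congr_ae (Filter.Eventually.of_forall fun ω => ?_)
          simp only [Pi.mul_apply]; rw [div_eq_mul_inv]; ring
      _ = ∫ ω, (P[(fun ω => (π (X ω))⁻¹) * fun ω => A ω * (Y ω - m1 (X ω))|(MeasurableSpace.comap X MeasurableSpace.pi)]) ω ∂P :=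
          (integral_condExp hmG).symm
      _ = ∫ ω, e (X ω) / π (X ω) * (μ1 (X ω) - m1 (X ω)) ∂P := by
          refine integral_congr_ae (hpull.trans ?_)
          filter_upwards [hB1] with ω h
          simp only [Pi.mul_apply, h]
          rw [div_eq_mul_inv]; ring
  have hC0' : ∫ ω, (1 - A ω) * (Y ω - m0 (X ω)) / (1 - π (X ω)) ∂P
      = ∫ ω, (1 - e (X ω)) / (1 - π (X ω)) * (μ0 (X ω) - m0 (X ω)) ∂P := by
    have hw : StronglyMeasurable[(MeasurableSpace.comap X MeasurableSpace.pi)] fun ω => (1 - π (X ω))⁻¹ :=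
      ((measurable_const.sub (hπ.comp hXG)).inv).stronglyMeasurable
    have hpull := condExp_mul_of_stronglyMeasurable_left (m := (MeasurableSpace.comap X MeasurableSpace.pi)) (μ := P)
      (f := fun ω => (1 - π (X ω))⁻¹) (g := fun ω => (1 - A ω) * (Y ω - m0 (X ω))) hw hIfG0 hIG0
    calc ∫ ω, (1 - A ω) * (Y ω - m0 (X ω)) / (1 - π (X ω)) ∂P
        = ∫ ω, ((fun ω => (1 - π (X ω))⁻¹) * fun ω => (1 - A ω) * (Y ω - m0 (X ω))) ω ∂P := by
          refine integral_congr_ae (Filter.Eventually.of_forall fun ω => ?_)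
          simp only [Pi.mul_apply]; rw [div_eq_mul_inv]; ring
      _ = ∫ ω, (P[(fun ω => (1 - π (X ω))⁻¹) * fun ω => (1 - A ω) * (Y ω - m0 (X ω))|(MeasurableSpace.comap X MeasurableSpace.pi)]) ω ∂P :=
          (integral_condExp hmG).symm
      _ = ∫ ω, (1 - e (X ω)) / (1 - π (X ω)) * (μ0 (X ω) - m0 (X ω)) ∂P := by
          refine integral_congr_ae (hpull.trans ?_)
          filter_upwards [hB0] with ω h
          simp only [Pi.mul_apply, h]
          rw [div_eq_mul_inv]; ring
  -- identification of E[Y1], E[Y0]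
  have hAYY1 : ∀ ω, A ω * Y ω = A ω * Y1 ω := fun ω => by
    rcases hA01 ω with h | h <;> (rw [hcons ω, h]; ring)
  have hAYY0 : ∀ ω, (1 - A ω) * Y ω = (1 - A ω) * Y0 ω := fun ω => by
    rcases hA01 ω with h | h <;> (rw [hcons ω, h]; ring)
  have hDY1 : ∫ ω, Y1 ω ∂P = ∫ ω, μ1 (X ω) ∂P := by
    have hsplit : (fun ω => A ω * Y1 ω)
        = (fun ω => A ω * (Y ω - μ1 (X ω))) + fun ω => μ1 (X ω) * A ω := by
      funext ω; simp only [Pi.add_apply]; rw [← hAYY1 ω]; ring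
    have h1 : P[fun ω => A ω * Y1 ω|(MeasurableSpace.comap X MeasurableSpace.pi)] =ᵐ[P] fun ω => e (X ω) * μ1 (X ω) := by
      rw [hsplit]
      refine (condExp_add hIg1 hIμA _).trans ?_
      have hmul : P[fun ω => μ1 (X ω) * A ω|(MeasurableSpace.comap X MeasurableSpace.pi)]
          =ᵐ[P] fun ω => μ1 (X ω) * (P[A|(MeasurableSpace.comap X MeasurableSpace.pi)]) ω :=
        condExp_mul_of_stronglyMeasurable_left (m := (MeasurableSpace.comap X MeasurableSpace.pi)) (μ := P)
          (f := fun ω => μ1 (X ω)) (g := A) (hμ1.comp hXG).stronglyMeasurable hIμA hIA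
      filter_upwards [hor1, hmul, heX] with ω ha hb hc
      simp only [Pi.add_apply, ha, hb, ← hc]
      ring
    have h2 : (fun ω => e (X ω) * (P[Y1|(MeasurableSpace.comap X MeasurableSpace.pi)]) ω) =ᵐ[P] fun ω => e (X ω) * μ1 (X ω) :=
      hig1.symm.trans h1
    have h3 : P[Y1|(MeasurableSpace.comap X MeasurableSpace.pi)] =ᵐ[P] fun ω => μ1 (X ω) := by
      filter_upwards [h2, hpos] with ω h hp
      have hne : (0 : ℝ) < e (X ω) := lt_of_lt_of_le hε hp.1
      exact mul_left_cancel₀ hne.ne' h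
    calc ∫ ω, Y1 ω ∂P = ∫ ω, (P[Y1|(MeasurableSpace.comap X MeasurableSpace.pi)]) ω ∂P := (integral_condExp hmG).symm
      _ = ∫ ω, μ1 (X ω) ∂P := integral_congr_ae h3
  have hDY0 : ∫ ω, Y0 ω ∂P = ∫ ω, μ0 (X ω) ∂P := by
    have hsplit : (fun ω => (1 - A ω) * Y0 ω)
        = (fun ω => (1 - A ω) * (Y ω - μ0 (X ω))) + fun ω => μ0 (X ω) * (1 - A ω) := by
      funext ω; simp only [Pi.add_apply]; rw [← hAYY0 ω]; ring
    have h1 : P[fun ω => (1 - A ω) * Y0 ω|(MeasurableSpace.comap X MeasurableSpace.pi)]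
        =ᵐ[P] fun ω => (1 - e (X ω)) * μ0 (X ω) := by
      rw [hsplit]
      refine (condExp_add hIg0 hIμA0 _).trans ?_
      have hmul : P[fun ω => μ0 (X ω) * (1 - A ω)|(MeasurableSpace.comap X MeasurableSpace.pi)]
          =ᵐ[P] fun ω => μ0 (X ω) * (P[fun ω => 1 - A ω|(MeasurableSpace.comap X MeasurableSpace.pi)]) ω :=
        condExp_mul_of_stronglyMeasurable_left (m := (MeasurableSpace.comap X MeasurableSpace.pi)) (μ := P)
          (f := fun ω => μ0 (X ω)) (g := fun ω => 1 - A ω)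
          (hμ0.comp hXG).stronglyMeasurable hIμA0 hI1A
      filter_upwards [hor0, hmul, hcA] with ω ha hb hc
      simp only [Pi.add_apply, ha, hb, hc]
      ring
    have h2 : (fun ω => (1 - e (X ω)) * (P[Y0|(MeasurableSpace.comap X MeasurableSpace.pi)]) ω)
        =ᵐ[P] fun ω => (1 - e (X ω)) * μ0 (X ω) := hig0.symm.trans h1
    have h3 : P[Y0|(MeasurableSpace.comap X MeasurableSpace.pi)] =ᵐ[P] fun ω => μ0 (X ω) := by
      filter_upwards [h2, hpos] with ω h hp
      have hne : (0 : ℝ) < 1 - e (X ω) := by linarith [hp.2]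
      exact mul_left_cancel₀ hne.ne' h
    calc ∫ ω, Y0 ω ∂P = ∫ ω, (P[Y0|(MeasurableSpace.comap X MeasurableSpace.pi)]) ω ∂P := (integral_condExp hmG).symm
      _ = ∫ ω, μ0 (X ω) ∂P := integral_congr_ae h3
  -- assemble
  have hsubm : Integrable (fun ω => m1 (X ω) - m0 (X ω)) P := hIm1X.sub hIm0X
  have hsub1 : Integrable (fun ω => μ1 (X ω) - m1 (X ω)) P := hIμ1X.sub hIm1X
  have hsub0 : Integrable (fun ω => μ0 (X ω) - m0 (X ω)) P := hIμ0X.sub hIm0X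
  have hadd : Integrable (fun ω => m1 (X ω) - m0 (X ω)
      + A ω * (Y ω - m1 (X ω)) / π (X ω)) P := hsubm.add hIT1
  have eL1 : ∫ ω, (m1 (X ω) - m0 (X ω) + A ω * (Y ω - m1 (X ω)) / π (X ω)
        - (1 - A ω) * (Y ω - m0 (X ω)) / (1 - π (X ω))) ∂P
      = (∫ ω, (m1 (X ω) - m0 (X ω) + A ω * (Y ω - m1 (X ω)) / π (X ω)) ∂P)
        - ∫ ω, (1 - A ω) * (Y ω - m0 (X ω)) / (1 - π (X ω)) ∂P := integral_sub hadd hIT0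
  have eL2 : ∫ ω, (m1 (X ω) - m0 (X ω) + A ω * (Y ω - m1 (X ω)) / π (X ω)) ∂P
      = (∫ ω, (m1 (X ω) - m0 (X ω)) ∂P) + ∫ ω, A ω * (Y ω - m1 (X ω)) / π (X ω) ∂P :=
    integral_add hsubm hIT1
  have eL3 : ∫ ω, (m1 (X ω) - m0 (X ω)) ∂P = ∫ ω, m1 (X ω) ∂P - ∫ ω, m0 (X ω) ∂P :=
    integral_sub hIm1X hIm0X
  have eY : ∫ ω, (Y1 ω - Y0 ω) ∂P = ∫ ω, Y1 ω ∂P - ∫ ω, Y0 ω ∂P :=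
    integral_sub hIY1 hIY0
  have hfun1 : (fun ω => (e (X ω) / π (X ω) - 1) * (μ1 (X ω) - m1 (X ω)))
      = fun ω => e (X ω) / π (X ω) * (μ1 (X ω) - m1 (X ω)) - (μ1 (X ω) - m1 (X ω)) := by
    funext ω; ring
  have eR1 : ∫ ω, (e (X ω) / π (X ω) - 1) * (μ1 (X ω) - m1 (X ω)) ∂P
      = (∫ ω, e (X ω) / π (X ω) * (μ1 (X ω) - m1 (X ω)) ∂P)
        - ∫ ω, (μ1 (X ω) - m1 (X ω)) ∂P := by
    rw [hfun1]; exact integral_sub hIeπ hsub1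
  have eR1' : ∫ ω, (μ1 (X ω) - m1 (X ω)) ∂P = ∫ ω, μ1 (X ω) ∂P - ∫ ω, m1 (X ω) ∂P :=
    integral_sub hIμ1X hIm1X
  have hfun0 : (fun ω => ((1 - e (X ω)) / (1 - π (X ω)) - 1) * (μ0 (X ω) - m0 (X ω)))
      = fun ω => (1 - e (X ω)) / (1 - π (X ω)) * (μ0 (X ω) - m0 (X ω))
          - (μ0 (X ω) - m0 (X ω)) := by
    funext ω; ring
  have eR0 : ∫ ω, ((1 - e (X ω)) / (1 - π (X ω)) - 1) * (μ0 (X ω) - m0 (X ω)) ∂P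
      = (∫ ω, (1 - e (X ω)) / (1 - π (X ω)) * (μ0 (X ω) - m0 (X ω)) ∂P)
        - ∫ ω, (μ0 (X ω) - m0 (X ω)) ∂P := by
    rw [hfun0]; exact integral_sub hIeπ0 hsub0
  have eR0' : ∫ ω, (μ0 (X ω) - m0 (X ω)) ∂P = ∫ ω, μ0 (X ω) ∂P - ∫ ω, m0 (X ω) ∂P :=
    integral_sub hIμ0X hIm0X
  rw [eL1, eL2, eL3, eY, eR1, eR1', eR0, eR0', hC1', hC0', hDY1, hDY0]
  ring
end

section
/- Double robustness of the AIPW functional: if either (i) π(X) = e(X) a.s., or (ii) m₁(X) = μ₁(X) and m₀(X) = μ₀(X) a.s., then E[ m₁(X) − m₀(X) + A·(Y−m₁(X))/π(X) − (1−A)·(Y−m₀(X))/(1−π(X)) ] = E[Y¹ − Y⁰]. -/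
open MeasureTheory ProbabilityTheory

lemma aipw_integrable_of_bdd {Ω : Type*} {mΩ : MeasurableSpace Ω} {P : Measure Ω}
    [IsFiniteMeasure P] {f : Ω → ℝ} (hf : Measurable f)
    {C : ℝ} (h : ∀ ω, |f ω| ≤ C) : Integrable f P :=
  (integrable_const C).mono' hf.aestronglyMeasurable
    (Filter.Eventually.of_forall fun ω => by simpa [Real.norm_eq_abs] using h ω)

lemma aipw_arm {Ω : Type*} [mΩ : MeasurableSpace Ω] {P : Measure Ω} [IsProbabilityMeasure P]
    {p : ℕ} {X : Ω → (Fin p → ℝ)} (m : MeasurableSpace Ω) (hm : m ≤ mΩ)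
    (hXm : Measurable[m] X)
    {W Z : Ω → ℝ} (hW : Measurable[mΩ] W) (hW01 : ∀ ω, W ω = 0 ∨ W ω = 1)
    (hZ : Measurable[mΩ] Z) {CZ : ℝ} (hZb : ∀ ω, |Z ω| ≤ CZ)
    {e' π' m' : (Fin p → ℝ) → ℝ} (hπ' : Measurable π') (hm' : Measurable m')
    {Cm : ℝ} (hm'b : ∀ x, |m' x| ≤ Cm)
    {ε : ℝ} (hε : 0 < ε) (hπpos : ∀ x, ε ≤ π' x)
    (heW : (fun ω => e' (X ω)) =ᵐ[P] P[W | m])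
    (hig : P[fun ω => W ω * Z ω | m] =ᵐ[P] fun ω => e' (X ω) * (P[Z | m]) ω)
    (hdr : ((fun ω => π' (X ω)) =ᵐ[P] fun ω => e' (X ω))
        ∨ ((P[Z | m]) =ᵐ[P] fun ω => m' (X ω))) :
    ∫ ω, (m' (X ω) + W ω * (Z ω - m' (X ω)) / π' (X ω)) ∂P = ∫ ω, Z ω ∂P := by
  have hX : Measurable[mΩ] X := hXm.mono hm le_rfl
  haveI : SigmaFinite (P.trim hm) := by infer_instance
  have hWb : ∀ ω, |W ω| ≤ 1 := fun ω => by rcases hW01 ω with h | h <;> simp [h]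
  have hπabs : ∀ x, ε ≤ |π' x| := fun x => (hπpos x).trans (le_abs_self _)
  have hCm0 : 0 ≤ Cm := le_trans (abs_nonneg _) (hm'b (fun _ => 0))
  set g0 : Ω → ℝ := fun ω => m' (X ω) with hg0_def
  set g1 : Ω → ℝ := fun ω => (1 / π' (X ω)) * (W ω * Z ω) with hg1_def
  set g2 : Ω → ℝ := fun ω => (-(m' (X ω)) / π' (X ω)) * W ω with hg2_def
  have hsplit : (fun ω => m' (X ω) + W ω * (Z ω - m' (X ω)) / π' (X ω))
      = fun ω => g0 ω + g1 ω + g2 ω := by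
    funext ω; simp only [hg0_def, hg1_def, hg2_def]; ring
  have int_g0 : Integrable g0 P :=
    aipw_integrable_of_bdd (P := P) (hm'.comp hX) (fun ω => hm'b (X ω))
  have int_W : Integrable W P := aipw_integrable_of_bdd hW hWb
  have int_WZ : Integrable (fun ω => W ω * Z ω) P :=
    aipw_integrable_of_bdd (P := P) (hW.mul hZ) (fun ω => by
      rw [abs_mul]
      calc |W ω| * |Z ω| ≤ 1 * |Z ω| :=
            mul_le_mul_of_nonneg_right (hWb ω) (abs_nonneg _)
        _ ≤ CZ := by rw [one_mul]; exact hZb ω)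
  have int_g1 : Integrable g1 P :=
    int_WZ.bdd_mul ((measurable_const.div (hπ'.comp hX)).aestronglyMeasurable)
      (c := 1 / ε) (Filter.Eventually.of_forall fun ω => by
        rw [Real.norm_eq_abs, abs_div, abs_one]
        exact div_le_div₀ zero_le_one le_rfl hε (hπabs (X ω)))
  have int_g2 : Integrable g2 P :=
    int_W.bdd_mul (((hm'.comp hX).neg.div (hπ'.comp hX)).aestronglyMeasurable)
      (c := Cm / ε) (Filter.Eventually.of_forall fun ω => by
        rw [Real.norm_eq_abs, abs_div, abs_neg]
        exact div_le_div₀ hCm0 (hm'b (X ω)) hε (hπabs (X ω)))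
  have hce0 : P[g0 | m] = g0 :=
    condExp_of_stronglyMeasurable hm
      (Measurable.stronglyMeasurable (show Measurable[m] g0 from hm'.comp hXm)) int_g0
  have hce1 : P[g1 | m] =ᵐ[P]
      fun ω => (1 / π' (X ω)) * (e' (X ω) * (P[Z | m]) ω) := by
    have h := condExp_mul_of_stronglyMeasurable_left
      (m := m) (μ := P) (f := fun ω => 1 / π' (X ω)) (g := fun ω => W ω * Z ω)
      (Measurable.stronglyMeasurable
        (show Measurable[m] _ from Measurable.div measurable_const (hπ'.comp hXm))) int_g1 int_WZ
    refine h.trans ?_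
    filter_upwards [hig] with ω hω
    simp only [Pi.mul_apply, hω]
  have hce2 : P[g2 | m] =ᵐ[P]
      fun ω => (-(m' (X ω)) / π' (X ω)) * e' (X ω) := by
    have h := condExp_mul_of_stronglyMeasurable_left
      (m := m) (μ := P) (f := fun ω => -(m' (X ω)) / π' (X ω)) (g := W)
      (Measurable.stronglyMeasurable
        (show Measurable[m] _ from Measurable.div (Measurable.neg (hm'.comp hXm))
          (hπ'.comp hXm))) int_g2 int_W
    refine h.trans ?_
    filter_upwards [heW] with ω hω
    simp only [Pi.mul_apply, ← hω]
  have hce : P[fun ω => g0 ω + g1 ω + g2 ω | m] =ᵐ[P] P[Z | m] := by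
    have hadd : P[fun ω => g0 ω + g1 ω + g2 ω | m]
        =ᵐ[P] fun ω => (P[g0|m]) ω + (P[g1|m]) ω + (P[g2|m]) ω := by
      have h1 := condExp_add (μ := P) (m := m) (int_g0.add int_g1) int_g2
      have h2 := condExp_add (μ := P) (m := m) int_g0 int_g1
      refine Filter.EventuallyEq.trans ?_ (by
        filter_upwards [h2] with ω hω
        show (P[g0 + g1|m]) ω + (P[g2|m]) ω = _
        rw [hω]; rfl)
      exact h1
    refine hadd.trans ?_
    rcases hdr with hdr | hdr
    · filter_upwards [hce1, hce2, hdr] with ω h1 h2 h3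
      rw [hce0, h1, h2, h3]
      have hne : e' (X ω) ≠ 0 := by
        rw [← h3]; exact (lt_of_lt_of_le hε (hπpos (X ω))).ne'
      simp only [hg0_def]
      field_simp
      ring
    · filter_upwards [hce1, hce2, hdr] with ω h1 h2 h3
      rw [hce0, h1, h2, h3]
      simp only [hg0_def]
      ring
  calc ∫ ω, (m' (X ω) + W ω * (Z ω - m' (X ω)) / π' (X ω)) ∂P
      = ∫ ω, (g0 ω + g1 ω + g2 ω) ∂P := by rw [hsplit]
    _ = ∫ ω, (P[fun ω => g0 ω + g1 ω + g2 ω | m]) ω ∂P := (integral_condExp hm).symm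
    _ = ∫ ω, (P[Z | m]) ω ∂P := integral_congr_ae hce
    _ = ∫ ω, Z ω ∂P := integral_condExp hm

lemma aipw_abs_bound {a w z b d Cm C ε : ℝ} (ha : |a| ≤ Cm) (hw : |w| ≤ 1)
    (hz : |z| ≤ C) (hb : |b| ≤ Cm) (hε : 0 < ε) (hd : ε ≤ |d|) :
    |a + w * (z - b) / d| ≤ Cm + (C + Cm) / ε := by
  have hC : 0 ≤ C := (abs_nonneg z).trans hz
  have hCm : 0 ≤ Cm := (abs_nonneg b).trans hb
  have h1 : |w * (z - b) / d| ≤ (C + Cm) / ε := by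
    rw [abs_div]
    refine div_le_div₀ (by linarith) ?_ hε hd
    rw [abs_mul]
    calc |w| * |z - b| ≤ 1 * (|z| + |b|) :=
          mul_le_mul hw (abs_sub _ _) (abs_nonneg _) zero_le_one
      _ ≤ C + Cm := by rw [one_mul]; exact add_le_add hz hb
  calc |a + w * (z - b) / d| ≤ |a| + |w * (z - b) / d| := abs_add_le _ _
    _ ≤ Cm + (C + Cm) / ε := add_le_add ha h1

lemma aipw_main
    {Ω : Type*} [mΩ : MeasurableSpace Ω] (P : Measure Ω) [IsProbabilityMeasure P]
    {p : ℕ} (X : Ω → (Fin p → ℝ)) (A : Ω → ℝ) (Y1 Y0 Y : Ω → ℝ)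
    (e μ1 μ0 π m1 m0 : (Fin p → ℝ) → ℝ) (ε : ℝ)
    (hX : Measurable X) (hA : Measurable A) (hA01 : ∀ ω, A ω = 0 ∨ A ω = 1)
    (hY1 : Measurable Y1) (hY0 : Measurable Y0)
    (hY1b : ∃ C, ∀ ω, |Y1 ω| ≤ C) (hY0b : ∃ C, ∀ ω, |Y0 ω| ≤ C)
    (hcons : ∀ ω, Y ω = A ω * Y1 ω + (1 - A ω) * Y0 ω)
    (he : Measurable e)
    (heX : (fun ω => e (X ω)) =ᵐ[P] P[A | MeasurableSpace.comap X inferInstance])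
    (hε : 0 < ε) (hε' : ε < 1 / 2)
    (hpos : ∀ᵐ ω ∂P, ε ≤ e (X ω) ∧ e (X ω) ≤ 1 - ε)
    (hig1 : P[fun ω => A ω * Y1 ω | MeasurableSpace.comap X inferInstance]
      =ᵐ[P] fun ω => e (X ω) * (P[Y1 | MeasurableSpace.comap X inferInstance]) ω)
    (hig0 : P[fun ω => (1 - A ω) * Y0 ω | MeasurableSpace.comap X inferInstance]
      =ᵐ[P] fun ω => (1 - e (X ω)) * (P[Y0 | MeasurableSpace.comap X inferInstance]) ω)
    (hμ1 : Measurable μ1) (hμ0 : Measurable μ0)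
    (hμ1b : ∃ C, ∀ x, |μ1 x| ≤ C) (hμ0b : ∃ C, ∀ x, |μ0 x| ≤ C)
    (hor1 : P[fun ω => A ω * (Y ω - μ1 (X ω)) | MeasurableSpace.comap X inferInstance]
      =ᵐ[P] fun _ => (0 : ℝ))
    (hor0 : P[fun ω => (1 - A ω) * (Y ω - μ0 (X ω)) | MeasurableSpace.comap X inferInstance]
      =ᵐ[P] fun _ => (0 : ℝ))
    (hπ : Measurable π) (hπpos : ∀ x, ε ≤ π x ∧ π x ≤ 1 - ε)
    (hm1 : Measurable m1) (hm0 : Measurable m0)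
    (hm1b : ∃ C, ∀ x, |m1 x| ≤ C) (hm0b : ∃ C, ∀ x, |m0 x| ≤ C)
    (hdr : ((fun ω => π (X ω)) =ᵐ[P] fun ω => e (X ω))
      ∨ (((fun ω => m1 (X ω)) =ᵐ[P] fun ω => μ1 (X ω))
          ∧ ((fun ω => m0 (X ω)) =ᵐ[P] fun ω => μ0 (X ω)))) :
    ∫ ω, (m1 (X ω) - m0 (X ω) + A ω * (Y ω - m1 (X ω)) / π (X ω)
          - (1 - A ω) * (Y ω - m0 (X ω)) / (1 - π (X ω))) ∂P
      = ∫ ω, (Y1 ω - Y0 ω) ∂P := by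
  obtain ⟨C1, hC1⟩ := hY1b
  obtain ⟨C0, hC0⟩ := hY0b
  obtain ⟨D1, hD1⟩ := hμ1b
  obtain ⟨D0, hD0⟩ := hμ0b
  obtain ⟨E1, hE1⟩ := hm1b
  obtain ⟨E0, hE0⟩ := hm0b
  set G : MeasurableSpace Ω := MeasurableSpace.comap X inferInstance with hG_def
  have hm : G ≤ mΩ := hX.comap_le
  haveI : SigmaFinite (P.trim hm) := by infer_instance
  have hXG : Measurable[G] X := Measurable.of_comap_le le_rfl
  have hAb : ∀ ω, |A ω| ≤ 1 := fun ω => by rcases hA01 ω with h | h <;> simp [h]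
  have intA : Integrable A P := aipw_integrable_of_bdd (P := P) hA hAb
  have intY1 : Integrable Y1 P := aipw_integrable_of_bdd (P := P) hY1 hC1
  have intY0 : Integrable Y0 P := aipw_integrable_of_bdd (P := P) hY0 hC0
  have hεπ1 : ∀ x, ε ≤ π x := fun x => (hπpos x).1
  have hεπ0 : ∀ x, ε ≤ 1 - π x := fun x => by linarith [(hπpos x).2]
  have hW0 : (fun ω => 1 - e (X ω)) =ᵐ[P] P[fun ω => 1 - A ω | G] := by
    have h : P[fun ω => 1 - A ω | G]
        =ᵐ[P] P[fun _ : Ω => (1 : ℝ) | G] - P[A | G] :=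
      condExp_sub (integrable_const (1 : ℝ)) intA _
    filter_upwards [h, heX] with ω h1 h2
    rw [h1, Pi.sub_apply, condExp_const hm, ← h2]
  have hcY1 : P[Y1 | G] =ᵐ[P] fun ω => μ1 (X ω) := by
    have hrew : (fun ω => A ω * (Y ω - μ1 (X ω)))
        = fun ω => A ω * Y1 ω + (-(μ1 (X ω))) * A ω := by
      funext ω
      rcases hA01 ω with h | h
      · simp [h]
      · simp only [hcons ω, h]; ring
    have int1 : Integrable (fun ω => A ω * Y1 ω) P :=
      aipw_integrable_of_bdd (P := P) (hA.mul hY1) (fun ω => by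
        rw [abs_mul]
        calc |A ω| * |Y1 ω| ≤ 1 * |Y1 ω| :=
              mul_le_mul_of_nonneg_right (hAb ω) (abs_nonneg _)
          _ ≤ C1 := by rw [one_mul]; exact hC1 ω)
    have int2 : Integrable (fun ω => (-(μ1 (X ω))) * A ω) P :=
      intA.bdd_mul ((hμ1.comp hX).neg.aestronglyMeasurable) (c := D1) (Filter.Eventually.of_forall fun ω => by
        simpa [Real.norm_eq_abs] using hD1 (X ω))
    have hadd : P[fun ω => A ω * (Y ω - μ1 (X ω)) | G]
        =ᵐ[P] P[fun ω => A ω * Y1 ω | G] + P[fun ω => (-(μ1 (X ω))) * A ω | G] := by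
      rw [hrew]; exact condExp_add int1 int2 _
    have hpull : P[fun ω => (-(μ1 (X ω))) * A ω | G]
        =ᵐ[P] (fun ω => -(μ1 (X ω))) * P[A | G] :=
      condExp_mul_of_stronglyMeasurable_left
        (Measurable.stronglyMeasurable
          (show Measurable[G] _ from (hμ1.comp hXG).neg)) int2 intA
    filter_upwards [hor1.symm.trans hadd, hpull, hig1, heX, hpos] with ω h1 h2 h3 h4 hp
    have h5 : (0 : ℝ) = e (X ω) * (P[Y1 | G]) ω + (-(μ1 (X ω))) * e (X ω) := by
      rw [h1, Pi.add_apply, h3, h2, Pi.mul_apply, ← h4]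
    have h6 : e (X ω) * ((P[Y1 | G]) ω - μ1 (X ω)) = 0 := by linarith [h5]
    have hne : e (X ω) ≠ 0 := (lt_of_lt_of_le hε hp.1).ne'
    have h7 := (mul_eq_zero.mp h6).resolve_left hne
    linarith [h7]
  have hcY0 : P[Y0 | G] =ᵐ[P] fun ω => μ0 (X ω) := by
    have hrew : (fun ω => (1 - A ω) * (Y ω - μ0 (X ω)))
        = fun ω => (1 - A ω) * Y0 ω + (-(μ0 (X ω))) * (1 - A ω) := by
      funext ω
      rcases hA01 ω with h | h
      · simp only [hcons ω, h]; ring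
      · simp [h]
    have h1Ab : ∀ ω, |1 - A ω| ≤ 1 := fun ω => by rcases hA01 ω with h | h <;> simp [h]
    have int1A : Integrable (fun ω => 1 - A ω) P :=
      aipw_integrable_of_bdd (P := P) (measurable_const.sub hA) h1Ab
    have int1 : Integrable (fun ω => (1 - A ω) * Y0 ω) P :=
      aipw_integrable_of_bdd (P := P) ((measurable_const.sub hA).mul hY0) (fun ω => by
        rw [abs_mul]
        calc |1 - A ω| * |Y0 ω| ≤ 1 * |Y0 ω| :=
              mul_le_mul_of_nonneg_right (h1Ab ω) (abs_nonneg _)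
          _ ≤ C0 := by rw [one_mul]; exact hC0 ω)
    have int2 : Integrable (fun ω => (-(μ0 (X ω))) * (1 - A ω)) P :=
      int1A.bdd_mul ((hμ0.comp hX).neg.aestronglyMeasurable) (c := D0) (Filter.Eventually.of_forall fun ω => by
        simpa [Real.norm_eq_abs] using hD0 (X ω))
    have hadd : P[fun ω => (1 - A ω) * (Y ω - μ0 (X ω)) | G]
        =ᵐ[P] P[fun ω => (1 - A ω) * Y0 ω | G]
          + P[fun ω => (-(μ0 (X ω))) * (1 - A ω) | G] := by
      rw [hrew]; exact condExp_add int1 int2 _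
    have hpull : P[fun ω => (-(μ0 (X ω))) * (1 - A ω) | G]
        =ᵐ[P] (fun ω => -(μ0 (X ω))) * P[fun ω => 1 - A ω | G] :=
      condExp_mul_of_stronglyMeasurable_left
        (Measurable.stronglyMeasurable
          (show Measurable[G] _ from (hμ0.comp hXG).neg)) int2 int1A
    filter_upwards [hor0.symm.trans hadd, hpull, hig0, hW0, hpos] with ω h1 h2 h3 h4 hp
    have h5 : (0 : ℝ) = (1 - e (X ω)) * (P[Y0 | G]) ω + (-(μ0 (X ω))) * (1 - e (X ω)) := by
      rw [h1, Pi.add_apply, h3, h2, Pi.mul_apply, ← h4]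
    have h6 : (1 - e (X ω)) * ((P[Y0 | G]) ω - μ0 (X ω)) = 0 := by linarith [h5]
    have hne : (1 - e (X ω)) ≠ 0 := by
      have h8 : ε ≤ 1 - e (X ω) := by linarith [hp.2]
      exact (lt_of_lt_of_le hε h8).ne'
    have h7 := (mul_eq_zero.mp h6).resolve_left hne
    linarith [h7]
  have dr1 : ((fun ω => π (X ω)) =ᵐ[P] fun ω => e (X ω))
      ∨ ((P[Y1 | G]) =ᵐ[P] fun ω => m1 (X ω)) := by
    rcases hdr with h | ⟨h, _⟩
    · exact Or.inl h
    · exact Or.inr (hcY1.trans h.symm)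
  have dr0 : ((fun ω => 1 - π (X ω)) =ᵐ[P] fun ω => 1 - e (X ω))
      ∨ ((P[Y0 | G]) =ᵐ[P] fun ω => m0 (X ω)) := by
    rcases hdr with h | ⟨_, h⟩
    · exact Or.inl (by filter_upwards [h] with ω hω; rw [hω])
    · exact Or.inr (hcY0.trans h.symm)
  have arm1 := aipw_arm (mΩ := mΩ) (e' := e) G hm hXG hA hA01 hY1 hC1 hπ hm1 hE1 hε hεπ1 heX hig1 dr1
  have arm0 := aipw_arm (mΩ := mΩ) (e' := fun x => 1 - e x) G hm hXG (measurable_const.sub hA)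
    (fun ω => by rcases hA01 ω with h | h <;> simp [h])
    hY0 hC0 (measurable_const.sub hπ) hm0 hE0 hε hεπ0 hW0 hig0 dr0
  have int1 : Integrable (fun ω => m1 (X ω) + A ω * (Y1 ω - m1 (X ω)) / π (X ω)) P := by
    refine aipw_integrable_of_bdd (P := P)
      ((hm1.comp hX).add ((hA.mul (hY1.sub (hm1.comp hX))).div (hπ.comp hX)))
      (C := E1 + (C1 + E1) / ε) (fun ω => ?_)
    exact aipw_abs_bound (hE1 (X ω)) (hAb ω) (hC1 ω) (hE1 (X ω)) hε
      ((hεπ1 (X ω)).trans (le_abs_self _))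
  have int0 : Integrable
      (fun ω => m0 (X ω) + (1 - A ω) * (Y0 ω - m0 (X ω)) / (1 - π (X ω))) P := by
    refine aipw_integrable_of_bdd (P := P)
      ((hm0.comp hX).add (((measurable_const.sub hA).mul
        (hY0.sub (hm0.comp hX))).div (measurable_const.sub (hπ.comp hX))))
      (C := E0 + (C0 + E0) / ε) (fun ω => ?_)
    refine aipw_abs_bound (hE0 (X ω)) ?_ (hC0 ω) (hE0 (X ω)) hε
      ((hεπ0 (X ω)).trans (le_abs_self _))
    rcases hA01 ω with h | h <;> simp [h]
  have hpt : ∀ ω, (m1 (X ω) - m0 (X ω) + A ω * (Y ω - m1 (X ω)) / π (X ω)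
        - (1 - A ω) * (Y ω - m0 (X ω)) / (1 - π (X ω)))
      = (m1 (X ω) + A ω * (Y1 ω - m1 (X ω)) / π (X ω))
        - (m0 (X ω) + (1 - A ω) * (Y0 ω - m0 (X ω)) / (1 - π (X ω))) := fun ω => by
    have hYeq1 : A ω * (Y ω - m1 (X ω)) = A ω * (Y1 ω - m1 (X ω)) := by
      rcases hA01 ω with h | h
      · simp [h]
      · simp only [hcons ω, h]; ring
    have hYeq0 : (1 - A ω) * (Y ω - m0 (X ω)) = (1 - A ω) * (Y0 ω - m0 (X ω)) := by
      rcases hA01 ω with h | h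
      · simp only [hcons ω, h]; ring
      · simp [h]
    rw [hYeq1, hYeq0]; ring
  calc ∫ ω, (m1 (X ω) - m0 (X ω) + A ω * (Y ω - m1 (X ω)) / π (X ω)
          - (1 - A ω) * (Y ω - m0 (X ω)) / (1 - π (X ω))) ∂P
      = ∫ ω, ((m1 (X ω) + A ω * (Y1 ω - m1 (X ω)) / π (X ω))
          - (m0 (X ω) + (1 - A ω) * (Y0 ω - m0 (X ω)) / (1 - π (X ω)))) ∂P :=
        integral_congr_ae (Filter.Eventually.of_forall hpt)
    _ = (∫ ω, (m1 (X ω) + A ω * (Y1 ω - m1 (X ω)) / π (X ω)) ∂P)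
        - ∫ ω, (m0 (X ω) + (1 - A ω) * (Y0 ω - m0 (X ω)) / (1 - π (X ω))) ∂P :=
        integral_sub int1 int0
    _ = (∫ ω, Y1 ω ∂P) - ∫ ω, Y0 ω ∂P := by rw [arm1]; exact congrArg (fun t => (∫ ω, Y1 ω ∂P) - t) arm0
    _ = ∫ ω, (Y1 ω - Y0 ω) ∂P := (integral_sub intY1 intY0).symm

/-- **Double robustness of the AIPW functional.**
If either the working propensity score is correct (`π(X) = e(X)` a.s.) or the working outcome
regressions are correct (`m₁(X) = μ₁(X)` and `m₀(X) = μ₀(X)` a.s.), then the augmented IPW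
functional identifies the ATE: `E[AIPW] = E[Y¹ − Y⁰]`. -/
theorem aipw_double_robustness
    {Ω : Type*} [MeasurableSpace Ω] (P : Measure Ω) [IsProbabilityMeasure P]
    {p : ℕ} (X : Ω → (Fin p → ℝ)) (A : Ω → ℝ) (Y1 Y0 Y : Ω → ℝ)
    (e μ1 μ0 π m1 m0 : (Fin p → ℝ) → ℝ) (ε : ℝ)
    (hX : Measurable X) (hA : Measurable A) (hA01 : ∀ ω, A ω = 0 ∨ A ω = 1)
    (hY1 : Measurable Y1) (hY0 : Measurable Y0)
    (hY1b : ∃ C, ∀ ω, |Y1 ω| ≤ C) (hY0b : ∃ C, ∀ ω, |Y0 ω| ≤ C)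
    (hcons : ∀ ω, Y ω = A ω * Y1 ω + (1 - A ω) * Y0 ω)
    (he : Measurable e)
    (heX : (fun ω => e (X ω)) =ᵐ[P] P[A | MeasurableSpace.comap X inferInstance])
    (hε : 0 < ε) (hε' : ε < 1 / 2)
    (hpos : ∀ᵐ ω ∂P, ε ≤ e (X ω) ∧ e (X ω) ≤ 1 - ε)
    (hig1 : P[fun ω => A ω * Y1 ω | MeasurableSpace.comap X inferInstance]
      =ᵐ[P] fun ω => e (X ω) * (P[Y1 | MeasurableSpace.comap X inferInstance]) ω)
    (hig0 : P[fun ω => (1 - A ω) * Y0 ω | MeasurableSpace.comap X inferInstance]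
      =ᵐ[P] fun ω => (1 - e (X ω)) * (P[Y0 | MeasurableSpace.comap X inferInstance]) ω)
    (hμ1 : Measurable μ1) (hμ0 : Measurable μ0)
    (hμ1b : ∃ C, ∀ x, |μ1 x| ≤ C) (hμ0b : ∃ C, ∀ x, |μ0 x| ≤ C)
    (hor1 : P[fun ω => A ω * (Y ω - μ1 (X ω)) | MeasurableSpace.comap X inferInstance]
      =ᵐ[P] fun _ => (0 : ℝ))
    (hor0 : P[fun ω => (1 - A ω) * (Y ω - μ0 (X ω)) | MeasurableSpace.comap X inferInstance]
      =ᵐ[P] fun _ => (0 : ℝ))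
    (hπ : Measurable π) (hπpos : ∀ x, ε ≤ π x ∧ π x ≤ 1 - ε)
    (hm1 : Measurable m1) (hm0 : Measurable m0)
    (hm1b : ∃ C, ∀ x, |m1 x| ≤ C) (hm0b : ∃ C, ∀ x, |m0 x| ≤ C)
    (hdr : ((fun ω => π (X ω)) =ᵐ[P] fun ω => e (X ω))
      ∨ (((fun ω => m1 (X ω)) =ᵐ[P] fun ω => μ1 (X ω))
          ∧ ((fun ω => m0 (X ω)) =ᵐ[P] fun ω => μ0 (X ω)))) :
    ∫ ω, (m1 (X ω) - m0 (X ω) + A ω * (Y ω - m1 (X ω)) / π (X ω)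
          - (1 - A ω) * (Y ω - m0 (X ω)) / (1 - π (X ω))) ∂P
      = ∫ ω, (Y1 ω - Y0 ω) ∂P :=
  aipw_main P X A Y1 Y0 Y e μ1 μ0 π m1 m0 ε hX hA hA01 hY1 hY0 hY1b hY0b hcons he heX
    hε hε' hpos hig1 hig0 hμ1 hμ0 hμ1b hμ0b hor1 hor0 hπ hπpos hm1 hm0 hm1b hm0b hdr
end

section
/- Mix-and-match double robustness of the site-stratified target estimator: suppose that for every target site k ∈ T, either (i) π_k(X) = e_k(X) a.e. under the law of X given R = k, or (ii) m_{1,k}(X) = μ_{1,k}(X) and m_{0,k}(X) = μ_{0,k}(X) a.e. under the law of X given R = k (the correct alternative may differ across sites). Then the weighted site-stratified AIPW functional identifies the target average treatment effect: Σ_{k∈T} (P(R=k)/P(R∈T)) · E_k[ m_{1,k}(X) − m_{0,k}(X) + A·(Y−m_{1,k}(X))/π_k(X) − (1−A)·(Y−m_{0,k}(X))/(1−π_k(X)) ] = E[Y¹ − Y⁰ ∣ R ∈ T], where E_k denotes expectation under the conditional probability P(· ∣ R = k). -/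
open MeasureTheory ProbabilityTheory

private lemma my_integrable_of_bdd {Ω : Type*} [MeasurableSpace Ω] {ν : Measure Ω}
    [IsFiniteMeasure ν] {f : Ω → ℝ} (hf : AEStronglyMeasurable f ν) {C : ℝ}
    (h : ∀ ω, |f ω| ≤ C) : Integrable f ν :=
  ⟨hf, HasFiniteIntegral.of_bounded (C := C) (Filter.Eventually.of_forall fun ω => by
    simpa [Real.norm_eq_abs] using h ω)⟩

/-- Pull-out computation for one treatment arm. -/
private lemma condexp_arm_eq {Ω : Type*} [MeasurableSpace Ω] (ν : Measure Ω)
    [IsProbabilityMeasure ν] {p : ℕ} {X : Ω → (Fin p → ℝ)} {W Yw : Ω → ℝ}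
    {ew f : (Fin p → ℝ) → ℝ}
    (hX : Measurable X) (hW : Measurable W) (hW1 : ∀ ω, |W ω| ≤ 1)
    (hYw : Measurable Yw) {CY : ℝ} (hYwb : ∀ ω, |Yw ω| ≤ CY)
    (hf : Measurable f) {Cf : ℝ} (hfb : ∀ x, |f x| ≤ Cf)
    (hWc : (fun ω => ew (X ω)) =ᵐ[ν] ν[W | MeasurableSpace.comap X inferInstance])
    (hig : ν[fun ω => W ω * Yw ω | MeasurableSpace.comap X inferInstance]
      =ᵐ[ν] fun ω => ew (X ω) * (ν[Yw | MeasurableSpace.comap X inferInstance]) ω) :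
    ν[fun ω => W ω * (Yw ω - f (X ω)) | MeasurableSpace.comap X inferInstance]
      =ᵐ[ν] fun ω => ew (X ω)
        * ((ν[Yw | MeasurableSpace.comap X inferInstance]) ω - f (X ω)) := by
  have hXG : Measurable[MeasurableSpace.comap X inferInstance] X := fun t ht => ⟨t, ht, rfl⟩
  have hfG : StronglyMeasurable[MeasurableSpace.comap X inferInstance] fun ω => f (X ω) :=
    (hf.comp hXG).stronglyMeasurable
  have intW : Integrable W ν := my_integrable_of_bdd hW.aestronglyMeasurable hW1
  have intWY : Integrable (fun ω => W ω * Yw ω) ν :=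
    my_integrable_of_bdd (hW.mul hYw).aestronglyMeasurable (C := CY) fun ω => by
      calc |W ω * Yw ω| = |W ω| * |Yw ω| := abs_mul _ _
        _ ≤ 1 * |Yw ω| := by
            exact mul_le_mul_of_nonneg_right (hW1 ω) (abs_nonneg _)
        _ = |Yw ω| := one_mul _
        _ ≤ CY := hYwb ω
  have intfW : Integrable ((fun ω => f (X ω)) * W) ν :=
    my_integrable_of_bdd (((hf.comp hX).mul hW).aestronglyMeasurable) (C := Cf) fun ω => by
      calc |((fun ω => f (X ω)) * W) ω| = |f (X ω)| * |W ω| := abs_mul _ _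
        _ ≤ |f (X ω)| * 1 := mul_le_mul_of_nonneg_left (hW1 ω) (abs_nonneg _)
        _ = |f (X ω)| := mul_one _
        _ ≤ Cf := hfb _
  have h1 : (fun ω => W ω * (Yw ω - f (X ω)))
      = (fun ω => W ω * Yw ω) - ((fun ω => f (X ω)) * W) := by
    funext ω; simp only [Pi.sub_apply, Pi.mul_apply]; ring
  rw [h1]
  refine (condExp_sub intWY intfW (MeasurableSpace.comap X inferInstance)).trans ?_
  have hmul : ν[(fun ω => f (X ω)) * W | MeasurableSpace.comap X inferInstance]
      =ᵐ[ν] (fun ω => f (X ω)) * ν[W | MeasurableSpace.comap X inferInstance] :=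
    condExp_mul_of_stronglyMeasurable_left hfG intfW intW
  filter_upwards [hig, hmul, hWc] with ω h1 h2 h3
  simp only [Pi.sub_apply, Pi.mul_apply, h1, h2]
  rw [← h3]; ring

/-- Double-robust identification for one treatment arm. -/
private lemma aipw_arm_s4 {Ω : Type*} [MeasurableSpace Ω] (ν : Measure Ω)
    [IsProbabilityMeasure ν] {p : ℕ} {X : Ω → (Fin p → ℝ)} {W Yw Y : Ω → ℝ}
    {ew μw πw mw : (Fin p → ℝ) → ℝ} {ε : ℝ} (hε : 0 < ε)
    (hX : Measurable X) (hW : Measurable W) (hW1 : ∀ ω, |W ω| ≤ 1)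
    (hYw : Measurable Yw) {CY : ℝ} (hYwb : ∀ ω, |Yw ω| ≤ CY)
    (hWY : ∀ ω, W ω * Y ω = W ω * Yw ω)
    (hWc : (fun ω => ew (X ω)) =ᵐ[ν] ν[W | MeasurableSpace.comap X inferInstance])
    (hposν : ∀ᵐ ω ∂ν, ε ≤ ew (X ω))
    (hig : ν[fun ω => W ω * Yw ω | MeasurableSpace.comap X inferInstance]
      =ᵐ[ν] fun ω => ew (X ω) * (ν[Yw | MeasurableSpace.comap X inferInstance]) ω)
    (hμw : Measurable μw) {Cμ : ℝ} (hμb : ∀ x, |μw x| ≤ Cμ)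
    (hor : ν[fun ω => W ω * (Y ω - μw (X ω)) | MeasurableSpace.comap X inferInstance]
      =ᵐ[ν] fun _ => (0 : ℝ))
    (hπw : Measurable πw) (hπε : ∀ x, ε ≤ πw x)
    (hmw : Measurable mw) {Cm : ℝ} (hmb : ∀ x, |mw x| ≤ Cm)
    (hdr : (∀ᵐ ω ∂ν, πw (X ω) = ew (X ω)) ∨ (∀ᵐ ω ∂ν, mw (X ω) = μw (X ω))) :
    Integrable (fun ω => mw (X ω) + W ω * (Y ω - mw (X ω)) / πw (X ω)) ν ∧
    ∫ ω, (mw (X ω) + W ω * (Y ω - mw (X ω)) / πw (X ω)) ∂ν = ∫ ω, Yw ω ∂ν := by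
  have hG : MeasurableSpace.comap X inferInstance ≤ ‹MeasurableSpace Ω› := hX.comap_le
  have hXG : Measurable[MeasurableSpace.comap X inferInstance] X := fun t ht => ⟨t, ht, rfl⟩
  have hπpos : ∀ x, 0 < πw x := fun x => lt_of_lt_of_le hε (hπε x)
  -- rewrite the augmentation term
  have hg : (fun ω => W ω * (Y ω - mw (X ω)) / πw (X ω))
      = fun ω => (πw (X ω))⁻¹ * (W ω * (Yw ω - mw (X ω))) := by
    funext ω
    rw [mul_sub, hWY ω, ← mul_sub, div_eq_inv_mul]
  -- integrability facts
  have int_mw : Integrable (fun ω => mw (X ω)) ν :=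
    my_integrable_of_bdd (hmw.comp hX).aestronglyMeasurable fun ω => hmb _
  have hqb : ∀ ω, |W ω * (Yw ω - mw (X ω))| ≤ CY + Cm := fun ω => by
    calc |W ω * (Yw ω - mw (X ω))| = |W ω| * |Yw ω - mw (X ω)| := abs_mul _ _
      _ ≤ 1 * |Yw ω - mw (X ω)| := mul_le_mul_of_nonneg_right (hW1 ω) (abs_nonneg _)
      _ = |Yw ω - mw (X ω)| := one_mul _
      _ ≤ |Yw ω| + |mw (X ω)| := abs_sub _ _
      _ ≤ CY + Cm := add_le_add (hYwb ω) (hmb _)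
  have intq : Integrable (fun ω => W ω * (Yw ω - mw (X ω))) ν :=
    my_integrable_of_bdd (hW.mul (hYw.sub (hmw.comp hX))).aestronglyMeasurable hqb
  have intg1 : Integrable (fun ω => (πw (X ω))⁻¹ * (W ω * (Yw ω - mw (X ω)))) ν := by
    refine my_integrable_of_bdd
      (((hπw.comp hX).inv).mul (hW.mul (hYw.sub (hmw.comp hX)))).aestronglyMeasurable
      (C := ε⁻¹ * (CY + Cm)) fun ω => ?_
    rw [abs_mul]
    refine mul_le_mul ?_ (hqb ω) (abs_nonneg _) (by positivity)
    rw [abs_inv, abs_of_pos (hπpos _)]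
    exact inv_anti₀ hε (hπε _)
  have intg0 : Integrable (fun ω => W ω * (Y ω - mw (X ω)) / πw (X ω)) ν := hg ▸ intg1
  -- conditional expectation computation
  have hq := condexp_arm_eq ν hX hW hW1 hYw hYwb hmw hmb hWc hig
  have hπG : StronglyMeasurable[MeasurableSpace.comap X inferInstance]
      fun ω => (πw (X ω))⁻¹ := ((hπw.comp hXG).inv).stronglyMeasurable
  have hce : ν[fun ω => (πw (X ω))⁻¹ * (W ω * (Yw ω - mw (X ω)))
        | MeasurableSpace.comap X inferInstance]
      =ᵐ[ν] fun ω => (πw (X ω))⁻¹ * (ew (X ω)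
        * ((ν[Yw | MeasurableSpace.comap X inferInstance]) ω - mw (X ω))) := by
    have h1 : ν[(fun ω => (πw (X ω))⁻¹) * (fun ω => W ω * (Yw ω - mw (X ω)))
          | MeasurableSpace.comap X inferInstance]
        =ᵐ[ν] (fun ω => (πw (X ω))⁻¹)
          * ν[fun ω => W ω * (Yw ω - mw (X ω)) | MeasurableSpace.comap X inferInstance] :=
      condExp_mul_of_stronglyMeasurable_left hπG intg1 intq
    refine h1.trans ?_
    filter_upwards [hq] with ω h2
    simp only [Pi.mul_apply, h2]
  -- the key a.e. identity
  have hkey : (fun ω => (πw (X ω))⁻¹ * (ew (X ω)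
        * ((ν[Yw | MeasurableSpace.comap X inferInstance]) ω - mw (X ω))))
      =ᵐ[ν] fun ω => (ν[Yw | MeasurableSpace.comap X inferInstance]) ω - mw (X ω) := by
    rcases hdr with hπe | hme
    · filter_upwards [hπe, hposν] with ω h1 h2
      rw [h1, inv_mul_cancel_left₀ (ne_of_gt (lt_of_lt_of_le hε h2))]
    · have hor' : ν[fun ω => W ω * (Yw ω - μw (X ω)) | MeasurableSpace.comap X inferInstance]
          =ᵐ[ν] fun _ => (0 : ℝ) := by
        have : (fun ω => W ω * (Yw ω - μw (X ω))) = fun ω => W ω * (Y ω - μw (X ω)) := by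
          funext ω; rw [mul_sub, ← hWY ω, ← mul_sub]
        rw [this]; exact hor
      have hqμ := condexp_arm_eq ν hX hW hW1 hYw hYwb hμw hμb hWc hig
      have hzero : (fun ω => ew (X ω)
            * ((ν[Yw | MeasurableSpace.comap X inferInstance]) ω - μw (X ω)))
          =ᵐ[ν] fun _ => (0 : ℝ) := hqμ.symm.trans hor'
      have hcμ : (fun ω => (ν[Yw | MeasurableSpace.comap X inferInstance]) ω)
          =ᵐ[ν] fun ω => μw (X ω) := by
        filter_upwards [hzero, hposν] with ω h1 h2
        have hne : ew (X ω) ≠ 0 := ne_of_gt (lt_of_lt_of_le hε h2)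
        have := mul_eq_zero.1 h1
        rcases this with h | h
        · exact absurd h hne
        · linarith [sub_eq_zero.1 h]
      filter_upwards [hcμ, hme] with ω h1 h2
      simp only [h1, h2, sub_self, mul_zero]
  -- put everything together
  refine ⟨?_, ?_⟩
  · exact int_mw.add intg0
  · rw [integral_add int_mw intg0]
    have e1 : ∫ ω, W ω * (Y ω - mw (X ω)) / πw (X ω) ∂ν
        = ∫ ω, ((ν[Yw | MeasurableSpace.comap X inferInstance]) ω - mw (X ω)) ∂ν := by
      rw [hg, ← integral_condExp hG]
      exact integral_congr_ae (hce.trans hkey)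
    rw [e1, integral_sub integrable_condExp int_mw, integral_condExp hG]
    ring

/-- Per-site double-robust identification of the ATE. -/
private lemma aipw_site {Ω : Type*} [MeasurableSpace Ω] (ν : Measure Ω)
    [IsProbabilityMeasure ν] {p : ℕ} {X : Ω → (Fin p → ℝ)} {A Y1 Y0 Y : Ω → ℝ}
    {e' μ1' μ0' π' m1' m0' : (Fin p → ℝ) → ℝ} {ε : ℝ} (hε : 0 < ε)
    (hX : Measurable X) (hA : Measurable A) (hA01 : ∀ ω, A ω = 0 ∨ A ω = 1)
    (hY1 : Measurable Y1) (hY0 : Measurable Y0)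
    {C1 C0 : ℝ} (hY1b : ∀ ω, |Y1 ω| ≤ C1) (hY0b : ∀ ω, |Y0 ω| ≤ C0)
    (hcons : ∀ ω, Y ω = A ω * Y1 ω + (1 - A ω) * Y0 ω)
    (heX : (fun ω => e' (X ω)) =ᵐ[ν] ν[A | MeasurableSpace.comap X inferInstance])
    (hpos : ∀ᵐ ω ∂ν, ε ≤ e' (X ω) ∧ e' (X ω) ≤ 1 - ε)
    (hig1 : ν[fun ω => A ω * Y1 ω | MeasurableSpace.comap X inferInstance]
      =ᵐ[ν] fun ω => e' (X ω) * (ν[Y1 | MeasurableSpace.comap X inferInstance]) ω)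
    (hig0 : ν[fun ω => (1 - A ω) * Y0 ω | MeasurableSpace.comap X inferInstance]
      =ᵐ[ν] fun ω => (1 - e' (X ω)) * (ν[Y0 | MeasurableSpace.comap X inferInstance]) ω)
    (hμ1 : Measurable μ1') {Cμ1 : ℝ} (hμ1b : ∀ x, |μ1' x| ≤ Cμ1)
    (hμ0 : Measurable μ0') {Cμ0 : ℝ} (hμ0b : ∀ x, |μ0' x| ≤ Cμ0)
    (hor1 : ν[fun ω => A ω * (Y ω - μ1' (X ω)) | MeasurableSpace.comap X inferInstance]
      =ᵐ[ν] fun _ => (0 : ℝ))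
    (hor0 : ν[fun ω => (1 - A ω) * (Y ω - μ0' (X ω)) | MeasurableSpace.comap X inferInstance]
      =ᵐ[ν] fun _ => (0 : ℝ))
    (hπ : Measurable π') (hπpos : ∀ x, ε ≤ π' x ∧ π' x ≤ 1 - ε)
    (hm1 : Measurable m1') {Cm1 : ℝ} (hm1b : ∀ x, |m1' x| ≤ Cm1)
    (hm0 : Measurable m0') {Cm0 : ℝ} (hm0b : ∀ x, |m0' x| ≤ Cm0)
    (hdr : (∀ᵐ ω ∂ν, π' (X ω) = e' (X ω))
      ∨ ((∀ᵐ ω ∂ν, m1' (X ω) = μ1' (X ω)) ∧ (∀ᵐ ω ∂ν, m0' (X ω) = μ0' (X ω)))) :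
    ∫ ω, (m1' (X ω) - m0' (X ω) + A ω * (Y ω - m1' (X ω)) / π' (X ω)
        - (1 - A ω) * (Y ω - m0' (X ω)) / (1 - π' (X ω))) ∂ν
      = ∫ ω, (Y1 ω - Y0 ω) ∂ν := by
  have hA1 : ∀ ω, |A ω| ≤ 1 := fun ω => by rcases hA01 ω with h | h <;> simp [h]
  have h1A1 : ∀ ω, |1 - A ω| ≤ 1 := fun ω => by rcases hA01 ω with h | h <;> simp [h]
  have hWY1 : ∀ ω, A ω * Y ω = A ω * Y1 ω := fun ω => by
    rcases hA01 ω with h | h <;> rw [hcons] <;> simp [h]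
  have hWY0 : ∀ ω, (1 - A ω) * Y ω = (1 - A ω) * Y0 ω := fun ω => by
    rcases hA01 ω with h | h <;> rw [hcons] <;> simp [h]
  -- treated arm
  have arm1 := aipw_arm_s4 ν hε hX hA hA1 hY1 hY1b hWY1 heX
    (hpos.mono fun ω h => h.1) hig1 hμ1 hμ1b hor1 hπ (fun x => (hπpos x).1) hm1 hm1b
    (hdr.imp (fun h => h) (fun h => h.1))
  -- control arm
  have hWc0 : (fun ω => 1 - e' (X ω))
      =ᵐ[ν] ν[fun ω => 1 - A ω | MeasurableSpace.comap X inferInstance] := by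
    have hfun : (fun ω => 1 - A ω) = ((fun _ => (1 : ℝ)) - A) := rfl
    rw [hfun]
    have intA : Integrable A ν := my_integrable_of_bdd hA.aestronglyMeasurable hA1
    refine Filter.EventuallyEq.trans ?_ (condExp_sub (integrable_const 1) intA (MeasurableSpace.comap X inferInstance)).symm
    filter_upwards [heX] with ω h
    simp only [Pi.sub_apply, condExp_const hX.comap_le]
    rw [← h]
  have arm0 := aipw_arm_s4 ν (W := fun ω => 1 - A ω) (ew := fun x => 1 - e' x)
    (πw := fun x => 1 - π' x) (mw := m0') (μw := μ0') (Yw := Y0) (Y := Y)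
    hε hX (measurable_const.sub hA) h1A1 hY0 hY0b hWY0 hWc0
    (hpos.mono fun ω h => by show ε ≤ 1 - e' (X ω); linarith [h.2]) hig0 hμ0 hμ0b hor0
    (measurable_const.sub hπ) (fun x => by show ε ≤ 1 - π' x; linarith [(hπpos x).2]) hm0 hm0b
    (hdr.imp (fun h => h.mono fun ω hω => by show 1 - π' (X ω) = 1 - e' (X ω); rw [hω]) (fun h => h.2))
  obtain ⟨int1, eq1⟩ := arm1
  obtain ⟨int0, eq0⟩ := arm0
  have int0' : Integrable
      (fun ω => m0' (X ω) + (1 - A ω) * (Y ω - m0' (X ω)) / (1 - π' (X ω))) ν := int0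
  have eq0' : ∫ ω, (m0' (X ω) + (1 - A ω) * (Y ω - m0' (X ω)) / (1 - π' (X ω))) ∂ν
      = ∫ ω, Y0 ω ∂ν := eq0
  have intY1 : Integrable Y1 ν := my_integrable_of_bdd hY1.aestronglyMeasurable hY1b
  have intY0 : Integrable Y0 ν := my_integrable_of_bdd hY0.aestronglyMeasurable hY0b
  have hfun : (fun ω => m1' (X ω) - m0' (X ω) + A ω * (Y ω - m1' (X ω)) / π' (X ω)
        - (1 - A ω) * (Y ω - m0' (X ω)) / (1 - π' (X ω)))
      = fun ω => (m1' (X ω) + A ω * (Y ω - m1' (X ω)) / π' (X ω))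
        - (m0' (X ω) + (1 - A ω) * (Y ω - m0' (X ω)) / (1 - π' (X ω))) := by
    funext ω; ring
  rw [hfun, integral_sub int1 int0', eq1, eq0', ← integral_sub intY1 intY0]

/-- Law of total expectation over a finite partition of the target event. -/
private lemma cond_sum_agg {Ω S : Type*} [MeasurableSpace Ω] (P : Measure Ω)
    [IsProbabilityMeasure P] [MeasurableSpace S] [MeasurableSingletonClass S]
    {R : Ω → S} (hR : Measurable R) (T : Finset S) (hTne : T.Nonempty)
    (hTpos : ∀ k ∈ T, P {ω | R ω = k} ≠ 0) {g : Ω → ℝ} (hg : Integrable g P) :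
    ∑ k ∈ T, ((P {ω | R ω = k}).toReal / (P {ω | R ω ∈ T}).toReal) *
        ∫ ω, g ω ∂(P[|{ω | R ω = k}])
      = ∫ ω, g ω ∂(P[|{ω | R ω ∈ T}]) := by
  have hsm : ∀ k : S, MeasurableSet {ω | R ω = k} :=
    fun k => hR (measurableSet_singleton k)
  have hPT : P {ω | R ω ∈ T} ≠ 0 := by
    obtain ⟨k0, hk0⟩ := hTne
    intro h
    exact hTpos k0 hk0 (measure_mono_null
      (fun ω (hω : R ω = k0) => show R ω ∈ T from hω ▸ hk0) h)
  have hcond : ∀ s : Set Ω, ∫ ω, g ω ∂(P[|s]) = (P s).toReal⁻¹ * ∫ ω in s, g ω ∂P := by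
    intro s
    rw [ProbabilityTheory.cond, integral_smul_measure, ENNReal.toReal_inv, smul_eq_mul]
  have hUnion : {ω | R ω ∈ T} = ⋃ k ∈ T, {ω | R ω = k} := by
    ext ω; simp
  have hsplit : ∫ ω in {ω | R ω ∈ T}, g ω ∂P = ∑ k ∈ T, ∫ ω in {ω | R ω = k}, g ω ∂P := by
    rw [hUnion]
    refine integral_biUnion_finset T (fun k _ => hsm k) ?_ (fun k _ => hg.integrableOn)
    intro k _ l _ hkl
    exact Set.disjoint_left.2 fun ω h1 h2 => hkl ((h1 : R ω = k).symm.trans h2)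
  calc ∑ k ∈ T, ((P {ω | R ω = k}).toReal / (P {ω | R ω ∈ T}).toReal) *
        ∫ ω, g ω ∂(P[|{ω | R ω = k}])
      = ∑ k ∈ T, (P {ω | R ω ∈ T}).toReal⁻¹ * ∫ ω in {ω | R ω = k}, g ω ∂P := by
        refine Finset.sum_congr rfl fun k hk => ?_
        rw [hcond]
        have ha : (P {ω | R ω = k}).toReal ≠ 0 :=
          ENNReal.toReal_ne_zero.2 ⟨hTpos k hk, measure_ne_top _ _⟩
        have : (P {ω | R ω = k}).toReal / (P {ω | R ω ∈ T}).toReal *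
              ((P {ω | R ω = k}).toReal⁻¹ * ∫ ω in {ω | R ω = k}, g ω ∂P)
            = ((P {ω | R ω = k}).toReal * (P {ω | R ω = k}).toReal⁻¹) *
              ((P {ω | R ω ∈ T}).toReal⁻¹ * ∫ ω in {ω | R ω = k}, g ω ∂P) := by
          ring
        rw [this, mul_inv_cancel₀ ha, one_mul]
    _ = (P {ω | R ω ∈ T}).toReal⁻¹ * ∑ k ∈ T, ∫ ω in {ω | R ω = k}, g ω ∂P := by
        rw [Finset.mul_sum]
    _ = ∫ ω, g ω ∂(P[|{ω | R ω ∈ T}]) := by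
        rw [hcond, hsplit]

/-- **Mix-and-match double robustness of the site-stratified target estimator.**
If for every target site `k ∈ T` either the site propensity score model or the site outcome
regression model is correctly specified (possibly different alternatives in different sites),
the weighted site-stratified AIPW functional identifies the target average treatment effect
`E[Y¹ − Y⁰ ∣ R ∈ T]`. -/
theorem site_stratified_aipw_mix_and_match_double_robustness
    {Ω : Type*} [MeasurableSpace Ω] (P : Measure Ω) [IsProbabilityMeasure P]
    {p : ℕ} (X : Ω → (Fin p → ℝ)) (A : Ω → ℝ) (Y1 Y0 Y : Ω → ℝ)
    {S : Type*} [Fintype S] [MeasurableSpace S] [MeasurableSingletonClass S]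
    (R : Ω → S) (T : Finset S)
    (e μ1 μ0 π m1 m0 : S → (Fin p → ℝ) → ℝ) (ε : ℝ)
    (hX : Measurable X) (hA : Measurable A) (hA01 : ∀ ω, A ω = 0 ∨ A ω = 1)
    (hY1 : Measurable Y1) (hY0 : Measurable Y0)
    (hY1b : ∃ C, ∀ ω, |Y1 ω| ≤ C) (hY0b : ∃ C, ∀ ω, |Y0 ω| ≤ C)
    (hcons : ∀ ω, Y ω = A ω * Y1 ω + (1 - A ω) * Y0 ω)
    (hR : Measurable R) (hTne : T.Nonempty)
    (hTpos : ∀ k ∈ T, P {ω | R ω = k} ≠ 0)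
    (hε : 0 < ε) (hε' : ε < 1 / 2)
    (he : ∀ k ∈ T, Measurable (e k))
    (heX : ∀ k ∈ T, (fun ω => e k (X ω))
      =ᵐ[P[|{ω | R ω = k}]] (P[|{ω | R ω = k}])[A | MeasurableSpace.comap X inferInstance])
    (hpos : ∀ k ∈ T, ∀ᵐ ω ∂(P[|{ω | R ω = k}]), ε ≤ e k (X ω) ∧ e k (X ω) ≤ 1 - ε)
    (hig1 : ∀ k ∈ T, (P[|{ω | R ω = k}])[fun ω => A ω * Y1 ω |
        MeasurableSpace.comap X inferInstance]
      =ᵐ[P[|{ω | R ω = k}]] fun ω => e k (X ω) *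
        ((P[|{ω | R ω = k}])[Y1 | MeasurableSpace.comap X inferInstance]) ω)
    (hig0 : ∀ k ∈ T, (P[|{ω | R ω = k}])[fun ω => (1 - A ω) * Y0 ω |
        MeasurableSpace.comap X inferInstance]
      =ᵐ[P[|{ω | R ω = k}]] fun ω => (1 - e k (X ω)) *
        ((P[|{ω | R ω = k}])[Y0 | MeasurableSpace.comap X inferInstance]) ω)
    (hμ1 : ∀ k ∈ T, Measurable (μ1 k)) (hμ0 : ∀ k ∈ T, Measurable (μ0 k))
    (hμ1b : ∀ k ∈ T, ∃ C, ∀ x, |μ1 k x| ≤ C) (hμ0b : ∀ k ∈ T, ∃ C, ∀ x, |μ0 k x| ≤ C)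
    (hor1 : ∀ k ∈ T, (P[|{ω | R ω = k}])[fun ω => A ω * (Y ω - μ1 k (X ω)) |
        MeasurableSpace.comap X inferInstance] =ᵐ[P[|{ω | R ω = k}]] fun _ => (0 : ℝ))
    (hor0 : ∀ k ∈ T, (P[|{ω | R ω = k}])[fun ω => (1 - A ω) * (Y ω - μ0 k (X ω)) |
        MeasurableSpace.comap X inferInstance] =ᵐ[P[|{ω | R ω = k}]] fun _ => (0 : ℝ))
    (hπ : ∀ k ∈ T, Measurable (π k)) (hπpos : ∀ k ∈ T, ∀ x, ε ≤ π k x ∧ π k x ≤ 1 - ε)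
    (hm1 : ∀ k ∈ T, Measurable (m1 k)) (hm0 : ∀ k ∈ T, Measurable (m0 k))
    (hm1b : ∀ k ∈ T, ∃ C, ∀ x, |m1 k x| ≤ C) (hm0b : ∀ k ∈ T, ∃ C, ∀ x, |m0 k x| ≤ C)
    (hdr : ∀ k ∈ T,
      (∀ᵐ x ∂(Measure.map X (P[|{ω | R ω = k}])), π k x = e k x)
      ∨ ((∀ᵐ x ∂(Measure.map X (P[|{ω | R ω = k}])), m1 k x = μ1 k x)
          ∧ (∀ᵐ x ∂(Measure.map X (P[|{ω | R ω = k}])), m0 k x = μ0 k x))) :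
    ∑ k ∈ T, ((P {ω | R ω = k}).toReal / (P {ω | R ω ∈ T}).toReal) *
        ∫ ω, (m1 k (X ω) - m0 k (X ω) + A ω * (Y ω - m1 k (X ω)) / π k (X ω)
          - (1 - A ω) * (Y ω - m0 k (X ω)) / (1 - π k (X ω))) ∂(P[|{ω | R ω = k}])
      = ∫ ω, (Y1 ω - Y0 ω) ∂(P[|{ω | R ω ∈ T}]) := by
  classical
  have hYm : Measurable Y := by
    have hYe : Y = fun ω => A ω * Y1 ω + (1 - A ω) * Y0 ω := funext hcons
    rw [hYe]
    exact (hA.mul hY1).add ((measurable_const.sub hA).mul hY0)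
  obtain ⟨C1, hY1b'⟩ := hY1b
  obtain ⟨C0, hY0b'⟩ := hY0b
  have intg : Integrable (fun ω => Y1 ω - Y0 ω) P :=
    my_integrable_of_bdd (hY1.sub hY0).aestronglyMeasurable (C := |C1| + |C0|) fun ω => by
      calc |Y1 ω - Y0 ω| ≤ |Y1 ω| + |Y0 ω| := abs_sub _ _
        _ ≤ |C1| + |C0| := add_le_add ((hY1b' ω).trans (le_abs_self _))
            ((hY0b' ω).trans (le_abs_self _))
  have hsite : ∀ k ∈ T,
      ∫ ω, (m1 k (X ω) - m0 k (X ω) + A ω * (Y ω - m1 k (X ω)) / π k (X ω)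
          - (1 - A ω) * (Y ω - m0 k (X ω)) / (1 - π k (X ω))) ∂(P[|{ω | R ω = k}])
        = ∫ ω, (Y1 ω - Y0 ω) ∂(P[|{ω | R ω = k}]) := by
    intro k hk
    haveI : IsProbabilityMeasure (P[|{ω | R ω = k}]) :=
      cond_isProbabilityMeasure (hTpos k hk)
    obtain ⟨Cμ1, hμ1b'⟩ := hμ1b k hk
    obtain ⟨Cμ0, hμ0b'⟩ := hμ0b k hk
    obtain ⟨Cm1, hm1b'⟩ := hm1b k hk
    obtain ⟨Cm0, hm0b'⟩ := hm0b k hk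
    have hdr' : (∀ᵐ ω ∂(P[|{ω | R ω = k}]), π k (X ω) = e k (X ω))
        ∨ ((∀ᵐ ω ∂(P[|{ω | R ω = k}]), m1 k (X ω) = μ1 k (X ω))
            ∧ (∀ᵐ ω ∂(P[|{ω | R ω = k}]), m0 k (X ω) = μ0 k (X ω))) := by
      refine (hdr k hk).imp (fun h => ?_) (fun h => ⟨?_, ?_⟩)
      · exact (MeasureTheory.ae_map_iff hX.aemeasurable
          (measurableSet_eq_fun (hπ k hk)
            (he k hk))).1 h
      · exact (MeasureTheory.ae_map_iff hX.aemeasurable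
          (measurableSet_eq_fun (hm1 k hk)
            (hμ1 k hk))).1 h.1
      · exact (MeasureTheory.ae_map_iff hX.aemeasurable
          (measurableSet_eq_fun (hm0 k hk)
            (hμ0 k hk))).1 h.2
    exact aipw_site _ hε hX hA hA01 hY1 hY0 hY1b' hY0b' hcons (heX k hk) (hpos k hk)
      (hig1 k hk) (hig0 k hk) (hμ1 k hk) hμ1b' (hμ0 k hk) hμ0b' (hor1 k hk) (hor0 k hk)
      (hπ k hk) (hπpos k hk) (hm1 k hk) hm1b' (hm0 k hk) hm0b' hdr'
  calc ∑ k ∈ T, ((P {ω | R ω = k}).toReal / (P {ω | R ω ∈ T}).toReal) *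
        ∫ ω, (m1 k (X ω) - m0 k (X ω) + A ω * (Y ω - m1 k (X ω)) / π k (X ω)
          - (1 - A ω) * (Y ω - m0 k (X ω)) / (1 - π k (X ω))) ∂(P[|{ω | R ω = k}])
      = ∑ k ∈ T, ((P {ω | R ω = k}).toReal / (P {ω | R ω ∈ T}).toReal) *
          ∫ ω, (Y1 ω - Y0 ω) ∂(P[|{ω | R ω = k}]) :=
        Finset.sum_congr rfl fun k hk => by rw [hsite k hk]
    _ = ∫ ω, (Y1 ω - Y0 ω) ∂(P[|{ω | R ω ∈ T}]) :=
        cond_sum_agg P hR T hTne hTpos intg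
end

section
/- Bayes identity for the density ratio: the law of X under the conditional probability P(· ∣ C) is absolutely continuous with respect to the law of X under P(· ∣ B), and its Radon–Nikodym derivative equals, a.e. with respect to the law of X under P(· ∣ B), the function x ↦ (P(B)·h_C(x)) / (P(C)·h_B(x)). -/
open MeasureTheory ProbabilityTheory
open scoped ENNReal

lemma map_cond_eq_withDensity
    {Ω : Type*} [MeasurableSpace Ω] (P : Measure Ω) [IsProbabilityMeasure P]
    {p : ℕ} (X : Ω → (Fin p → ℝ)) (hX : Measurable X)
    (S : Set Ω) (hSmeas : MeasurableSet S) (hPS : P S ≠ 0)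
    (k : (Fin p → ℝ) → ℝ) (hk : Measurable k)
    (hver : (fun ω => k (X ω))
      =ᵐ[P] P[S.indicator fun _ => (1 : ℝ) | MeasurableSpace.comap X inferInstance]) :
    Measure.map X (P[|S]) = (P.map X).withDensity (fun x => ENNReal.ofReal (k x) / P S) := by
  have hm : MeasurableSpace.comap X inferInstance ≤ _ := hX.comap_le
  have hki : Integrable (fun ω => k (X ω)) P := (integrable_condExp).congr hver.symm
  have hkμ : Integrable k (P.map X) := by
    rwa [integrable_map_measure hk.aestronglyMeasurable hX.aemeasurable]
  have hind : Integrable (S.indicator fun _ => (1 : ℝ)) P :=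
    (integrable_const (1 : ℝ)).indicator hSmeas
  have hnnP : ∀ᵐ ω ∂P, 0 ≤ k (X ω) := by
    filter_upwards [hver, condExp_nonneg (m := MeasurableSpace.comap X inferInstance)
      (μ := P) (f := S.indicator fun _ => (1 : ℝ))
      (Filter.Eventually.of_forall fun ω => Set.indicator_nonneg (fun _ _ => zero_le_one) ω)]
      with ω h1 h2
    rw [h1]; exact h2
  have hnnμ : ∀ᵐ x ∂(P.map X), 0 ≤ k x := by
    rw [ae_map_iff hX.aemeasurable (measurableSet_le measurable_const hk)]
    exact hnnP
  ext A hA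
  rw [Measure.map_apply hX hA, cond_apply hSmeas, withDensity_apply _ hA]
  have hdiv : (fun x => ENNReal.ofReal (k x) / P S)
      = fun x => (P S)⁻¹ * ENNReal.ofReal (k x) := by
    funext x; rw [ENNReal.div_eq_inv_mul]
  rw [hdiv, lintegral_const_mul _ (by measurability)]
  congr 1
  have h1 : ∫⁻ x in A, ENNReal.ofReal (k x) ∂(P.map X)
      = ENNReal.ofReal (∫ x in A, k x ∂(P.map X)) :=
    (ofReal_integral_eq_lintegral_ofReal hkμ.restrict (ae_restrict_of_ae hnnμ)).symm
  have h2 : ∫ x in A, k x ∂(P.map X) = ∫ ω in X ⁻¹' A, k (X ω) ∂P :=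
    setIntegral_map hA hk.aestronglyMeasurable hX.aemeasurable
  have h3 : ∫ ω in X ⁻¹' A, k (X ω) ∂P
      = ∫ ω in X ⁻¹' A, S.indicator (fun _ => (1 : ℝ)) ω ∂P := by
    rw [setIntegral_congr_ae (hX hA) (hver.mono fun ω h _ => h)]
    exact setIntegral_condExp hm hind ⟨A, hA, rfl⟩
  have h4 : ∫ ω in X ⁻¹' A, S.indicator (fun _ => (1 : ℝ)) ω ∂P
      = (P (S ∩ X ⁻¹' A)).toReal := by
    rw [setIntegral_indicator hSmeas, setIntegral_const, smul_eq_mul, mul_one, Set.inter_comm]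
    rfl
  rw [h1, h2, h3, h4, ENNReal.ofReal_toReal (measure_ne_top _ _)]

/-- **Bayes identity for the density ratio.**
If `h_B∘X` and `h_C∘X` are versions of `E[1_B ∣ σ(X)]` and `E[1_C ∣ σ(X)]` and `h_B∘X ≥ ε > 0`
a.s., then the law of `X` under `P(·∣C)` is absolutely continuous w.r.t. the law of `X` under
`P(·∣B)`, with Radon–Nikodym derivative `x ↦ (P(B)·h_C(x)) / (P(C)·h_B(x))` a.e. -/
theorem density_ratio_bayes_identity
    {Ω : Type*} [MeasurableSpace Ω] (P : Measure Ω) [IsProbabilityMeasure P]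
    {p : ℕ} (X : Ω → (Fin p → ℝ)) (hX : Measurable X)
    (B C : Set Ω) (hBmeas : MeasurableSet B) (hCmeas : MeasurableSet C)
    (hPB : P B ≠ 0) (hPC : P C ≠ 0)
    (hB hC : (Fin p → ℝ) → ℝ) (ε : ℝ) (hε : 0 < ε)
    (hhB : Measurable hB) (hhC : Measurable hC)
    (hBver : (fun ω => hB (X ω))
      =ᵐ[P] P[B.indicator fun _ => (1 : ℝ) | MeasurableSpace.comap X inferInstance])
    (hCver : (fun ω => hC (X ω))
      =ᵐ[P] P[C.indicator fun _ => (1 : ℝ) | MeasurableSpace.comap X inferInstance])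
    (hover : ∀ᵐ ω ∂P, ε ≤ hB (X ω)) :
    Measure.map X (P[|C]) ≪ Measure.map X (P[|B])
      ∧ (Measure.map X (P[|C])).rnDeriv (Measure.map X (P[|B]))
        =ᵐ[Measure.map X (P[|B])]
          fun x => ENNReal.ofReal ((P B).toReal * hC x / ((P C).toReal * hB x)) := by
  set μ := P.map X with hμ
  set f : (Fin p → ℝ) → ℝ≥0∞ := fun x => ENNReal.ofReal (hB x) / P B with hf
  set g : (Fin p → ℝ) → ℝ≥0∞ := fun x => ENNReal.ofReal (hC x) / P C with hg
  set h : (Fin p → ℝ) → ℝ≥0∞ :=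
    fun x => ENNReal.ofReal ((P B).toReal * hC x / ((P C).toReal * hB x)) with hh
  have hfm : Measurable f := (ENNReal.measurable_ofReal.comp hhB).div_const _
  have hgm : Measurable g := (ENNReal.measurable_ofReal.comp hhC).div_const _
  have hhm : Measurable h := by
    apply ENNReal.measurable_ofReal.comp
    exact (measurable_const.mul hhC).div (measurable_const.mul hhB)
  have hmapB : Measure.map X (P[|B]) = μ.withDensity f :=
    map_cond_eq_withDensity P X hX B hBmeas hPB hB hhB hBver
  have hmapC : Measure.map X (P[|C]) = μ.withDensity g :=
    map_cond_eq_withDensity P X hX C hCmeas hPC hC hhC hCver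
  -- a.e. properties on μ
  have hεμ : ∀ᵐ x ∂μ, ε ≤ hB x := by
    rw [hμ, ae_map_iff hX.aemeasurable (measurableSet_le measurable_const hhB)]
    exact hover
  have hCnnP : ∀ᵐ ω ∂P, 0 ≤ hC (X ω) := by
    filter_upwards [hCver, condExp_nonneg (m := MeasurableSpace.comap X inferInstance)
      (μ := P) (f := C.indicator fun _ => (1 : ℝ))
      (Filter.Eventually.of_forall fun ω => Set.indicator_nonneg (fun _ _ => zero_le_one) ω)]
      with ω h1 h2
    rw [h1]; exact h2
  have hCnnμ : ∀ᵐ x ∂μ, 0 ≤ hC x := by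
    rw [hμ, ae_map_iff hX.aemeasurable (measurableSet_le measurable_const hhC)]
    exact hCnnP
  have hPBr : 0 < (P B).toReal :=
    ENNReal.toReal_pos hPB (measure_ne_top _ _)
  have hPCr : 0 < (P C).toReal :=
    ENNReal.toReal_pos hPC (measure_ne_top _ _)
  -- key: f * h = g a.e.
  have hfh : (fun x => f x * h x) =ᵐ[μ] g := by
    filter_upwards [hεμ, hCnnμ] with x hx1 hx2
    have hBx : 0 < hB x := lt_of_lt_of_le hε hx1
    have hPBeq : P B = ENNReal.ofReal ((P B).toReal) :=
      (ENNReal.ofReal_toReal (measure_ne_top _ _)).symm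
    have hPCeq : P C = ENNReal.ofReal ((P C).toReal) :=
      (ENNReal.ofReal_toReal (measure_ne_top _ _)).symm
    simp only [hf, hg, hh]
    rw [hPBeq, hPCeq, ← ENNReal.ofReal_div_of_pos hPBr, ← ENNReal.ofReal_div_of_pos hPCr,
      ← ENNReal.ofReal_mul (by positivity)]
    congr 1
    simp only [ENNReal.toReal_ofReal hPBr.le, ENNReal.toReal_ofReal hPCr.le]
    field_simp
  have hgf : μ.withDensity g = (μ.withDensity f).withDensity h := by
    rw [← withDensity_congr_ae hfh]
    exact withDensity_mul μ hfm hhm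
  haveI : IsProbabilityMeasure (P[|B]) := cond_isProbabilityMeasure hPB
  haveI : IsProbabilityMeasure (Measure.map X (P[|B])) :=
    Measure.isProbabilityMeasure_map hX.aemeasurable
  constructor
  · rw [hmapB, hmapC, hgf]
    exact withDensity_absolutelyContinuous _ _
  · haveI : IsProbabilityMeasure (μ.withDensity f) := hmapB ▸ inferInstance
    have hrn : ((μ.withDensity f).withDensity h).rnDeriv (μ.withDensity f)
        =ᵐ[μ.withDensity f] h := Measure.rnDeriv_withDensity _ hhm
    rw [hmapC, hmapB, hgf]
    exact hrn
end

section
/- Bound on the density ratio under overlap: a.e. with respect to the law of X under P(· ∣ B), the Radon–Nikodym derivative of the law of X under P(· ∣ C) with respect to the law of X under P(· ∣ B) is at most P(B) / (ε · P(C)). -/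
open MeasureTheory ProbabilityTheory
open scoped ENNReal

/-- **Bound on the density ratio under overlap.**
If `h_B∘X` is a version of `E[1_B ∣ σ(X)]` with `h_B∘X ≥ ε > 0` a.s. (overlap), then, a.e.
with respect to the law of `X` under `P(·∣B)`, the Radon–Nikodym derivative of the law of `X`
under `P(·∣C)` w.r.t. the law of `X` under `P(·∣B)` is at most `P(B) / (ε · P(C))`. -/
theorem density_ratio_bound_under_overlap
    {Ω : Type*} [MeasurableSpace Ω] (P : Measure Ω) [IsProbabilityMeasure P]
    {p : ℕ} (X : Ω → (Fin p → ℝ)) (hX : Measurable X)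
    (B C : Set Ω) (hBmeas : MeasurableSet B) (hCmeas : MeasurableSet C)
    (hPB : P B ≠ 0) (hPC : P C ≠ 0)
    (hB hC : (Fin p → ℝ) → ℝ) (ε : ℝ) (hε : 0 < ε)
    (hhB : Measurable hB) (hhC : Measurable hC)
    (hBver : (fun ω => hB (X ω))
      =ᵐ[P] P[B.indicator fun _ => (1 : ℝ) | MeasurableSpace.comap X inferInstance])
    (hCver : (fun ω => hC (X ω))
      =ᵐ[P] P[C.indicator fun _ => (1 : ℝ) | MeasurableSpace.comap X inferInstance])
    (hover : ∀ᵐ ω ∂P, ε ≤ hB (X ω)) :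
    ∀ᵐ x ∂(Measure.map X (P[|B])),
      (Measure.map X (P[|C])).rnDeriv (Measure.map X (P[|B])) x
        ≤ ENNReal.ofReal ((P B).toReal / (ε * (P C).toReal)) := by
  set μB := Measure.map X (P[|B]) with hμB
  set μC := Measure.map X (P[|C]) with hμC
  haveI : IsProbabilityMeasure (P[|B]) := cond_isProbabilityMeasure hPB
  haveI : IsProbabilityMeasure (P[|C]) := cond_isProbabilityMeasure hPC
  haveI : IsProbabilityMeasure μB := Measure.isProbabilityMeasure_map hX.aemeasurable
  haveI : IsProbabilityMeasure μC := Measure.isProbabilityMeasure_map hX.aemeasurable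
  have hm : MeasurableSpace.comap X inferInstance ≤ (inferInstance : MeasurableSpace Ω) :=
    hX.comap_le
  set c : ℝ≥0∞ := P B / (ENNReal.ofReal ε * P C) with hc
  have hεne : ENNReal.ofReal ε ≠ 0 := by
    simp [ENNReal.ofReal_eq_zero, not_le, hε]
  have hc_ne_zero : c ≠ 0 := by
    rw [hc]
    apply ENNReal.div_ne_zero.2
    exact ⟨hPB, ENNReal.mul_ne_top ENNReal.ofReal_ne_top (measure_ne_top P C)⟩
  have hc_ne_top : c ≠ ∞ := by
    rw [hc]
    exact (ENNReal.div_lt_top (measure_ne_top P B)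
      (by simp [mul_eq_zero, hεne, hPC])).ne
  -- key integral bound: for every measurable set S,
  -- ε * P (X⁻¹' S) ≤ P (B ∩ X⁻¹' S)
  have hint : Integrable (fun ω => hB (X ω)) P :=
    (integrable_condExp).congr hBver.symm
  have key : ∀ S : Set (Fin p → ℝ), MeasurableSet S →
      ENNReal.ofReal ε * P (X ⁻¹' S) ≤ P (B ∩ X ⁻¹' S) := by
    intro S hS
    set A := X ⁻¹' S with hA
    have hAmeas : MeasurableSet A := hX hS
    have hAm : MeasurableSet[MeasurableSpace.comap X inferInstance] A := ⟨S, hS, rfl⟩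
    have h1 : ε * (P A).toReal ≤ ∫ ω in A, hB (X ω) ∂P := by
      have : ∫ ω in A, ε ∂P = ε * (P A).toReal := by
        simp [mul_comm, measureReal_def]
      rw [← this]
      exact setIntegral_mono_ae (integrable_const ε).integrableOn hint.integrableOn hover
    have h2 : ∫ ω in A, hB (X ω) ∂P = (P (B ∩ A)).toReal := by
      haveI : SigmaFinite (P.trim hm) := (isFiniteMeasure_trim hm).toSigmaFinite
      have := setIntegral_condExp (μ := P) hm
        (integrable_const (1 : ℝ) |>.indicator hBmeas) hAm
      calc ∫ ω in A, hB (X ω) ∂P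
          = ∫ ω in A, (P[B.indicator fun _ => (1 : ℝ) |
              MeasurableSpace.comap X inferInstance]) ω ∂P :=
            setIntegral_congr_ae hAmeas (hBver.mono fun ω h _ => h)
        _ = ∫ ω in A, B.indicator (fun _ => (1 : ℝ)) ω ∂P := this
        _ = ∫ ω in A ∩ B, (1 : ℝ) ∂P := setIntegral_indicator hBmeas
        _ = (P (A ∩ B)).toReal := by simp [measureReal_def]
        _ = (P (B ∩ A)).toReal := by rw [Set.inter_comm]
    have h3 : ε * (P A).toReal ≤ (P (B ∩ A)).toReal := h2 ▸ h1
    calc ENNReal.ofReal ε * P A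
        = ENNReal.ofReal (ε * (P A).toReal) := by
          rw [ENNReal.ofReal_mul hε.le, ENNReal.ofReal_toReal (measure_ne_top P A)]
      _ ≤ ENNReal.ofReal ((P (B ∩ A)).toReal) := ENNReal.ofReal_le_ofReal h3
      _ = P (B ∩ A) := ENNReal.ofReal_toReal (measure_ne_top P _)
  -- measure inequality : μC ≤ c • μB
  have hle : μC ≤ c • μB := by
    rw [Measure.le_iff]
    intro S hS
    rw [Measure.smul_apply, smul_eq_mul, hμC, hμB, Measure.map_apply hX hS,
      Measure.map_apply hX hS, cond_apply hCmeas, cond_apply hBmeas]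
    have h1 : P (C ∩ X ⁻¹' S) ≤ P (X ⁻¹' S) := measure_mono Set.inter_subset_right
    have h2 : P (X ⁻¹' S) ≤ (ENNReal.ofReal ε)⁻¹ * P (B ∩ X ⁻¹' S) := by
      have := mul_le_mul_right (key S hS) (ENNReal.ofReal ε)⁻¹
      rwa [← mul_assoc, ENNReal.inv_mul_cancel hεne ENNReal.ofReal_ne_top, one_mul] at this
    calc (P C)⁻¹ * P (C ∩ X ⁻¹' S) ≤ (P C)⁻¹ * ((ENNReal.ofReal ε)⁻¹ * P (B ∩ X ⁻¹' S)) :=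
          mul_le_mul_right (h1.trans h2) _
      _ = c * ((P B)⁻¹ * P (B ∩ X ⁻¹' S)) := by
          have hPBc : P B * (P B)⁻¹ = 1 := ENNReal.mul_inv_cancel hPB (measure_ne_top P B)
          rw [hc, ENNReal.div_eq_inv_mul, ENNReal.mul_inv (Or.inl hεne)
            (Or.inl ENNReal.ofReal_ne_top)]
          calc (P C)⁻¹ * ((ENNReal.ofReal ε)⁻¹ * P (B ∩ X ⁻¹' S))
              = (ENNReal.ofReal ε)⁻¹ * (P C)⁻¹ * (P B * (P B)⁻¹) * P (B ∩ X ⁻¹' S) := by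
                rw [hPBc]; ring
            _ = (ENNReal.ofReal ε)⁻¹ * (P C)⁻¹ * P B * ((P B)⁻¹ * P (B ∩ X ⁻¹' S)) := by
                ring
  -- conclude about rnDeriv
  have hPCpos : 0 < (P C).toReal := ENNReal.toReal_pos hPC (measure_ne_top P C)
  have hconst : ENNReal.ofReal ((P B).toReal / (ε * (P C).toReal)) = c := by
    rw [ENNReal.ofReal_div_of_pos (by positivity), ENNReal.ofReal_mul hε.le,
      ENNReal.ofReal_toReal (measure_ne_top P B), ENNReal.ofReal_toReal (measure_ne_top P C)]
  rw [hconst]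
  haveI : IsFiniteMeasure (c • μB) := ⟨by
    rw [Measure.smul_apply, smul_eq_mul]
    exact ENNReal.mul_lt_top hc_ne_top.lt_top (measure_lt_top _ _)⟩
  have h1 : μC.rnDeriv (c • μB) ≤ᵐ[c • μB] 1 := Measure.rnDeriv_le_one_of_le hle
  have h1' : μC.rnDeriv (c • μB) ≤ᵐ[μB] 1 :=
    (Measure.absolutelyContinuous_smul hc_ne_zero (μ := μB)).ae_le h1
  have h2 : μC.rnDeriv (c • μB) =ᵐ[μB] c⁻¹ • μC.rnDeriv μB :=
    Measure.rnDeriv_smul_right_of_ne_top μC μB hc_ne_zero hc_ne_top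
  filter_upwards [h1', h2] with x hx1 hx2
  have : c⁻¹ * μC.rnDeriv μB x ≤ 1 := by
    rw [Pi.smul_apply, smul_eq_mul] at hx2
    rw [← hx2]; simpa using hx1
  calc μC.rnDeriv μB x = c * (c⁻¹ * μC.rnDeriv μB x) := by
        rw [← mul_assoc, ENNReal.mul_inv_cancel hc_ne_zero hc_ne_top, one_mul]
    _ ≤ c * 1 := mul_le_mul_right this _
    _ = c := mul_one c
end

section
/- Double robustness of the source-site density-ratio-weighted estimator: let Φ = E_T[ m₁(X) − m₀(X) ] + E_k[ ω̃(X)·( A·(Y−m₁(X))/π(X) − (1−A)·(Y−m₀(X))/(1−π(X)) ) ]. Then Φ = E[Y¹ − Y⁰ ∣ R ∈ T] provided that either (1) m₁ = μ_{1,T}, m₀ = μ_{0,T} a.e. under the law of X given R ∈ T and m₁ = μ_{1,k}, m₀ = μ_{0,k} a.e. under the law of X given R = k (outcome regression correct for target and source), or (2) π = e_k and ω̃ = ω a.e. under the law of X given R = k, and μ_{1,k} = μ_{1,T}, μ_{0,k} = μ_{0,T} a.e. under the law of X given R ∈ T (propensity score and density ratio correct for the source site, with outcome regression shared across sites). -/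
open MeasureTheory ProbabilityTheory

section Aux

variable {Ω : Type*} [MeasurableSpace Ω] {μ : Measure Ω} [IsProbabilityMeasure μ]
  {p : ℕ} {X : Ω → (Fin p → ℝ)}

lemma aux_int {f : Ω → ℝ} (hf : Measurable f) {C : ℝ} (hC : ∀ ω, |f ω| ≤ C) :
    Integrable f μ :=
  ⟨hf.aestronglyMeasurable,
    HasFiniteIntegral.of_bounded (ae_of_all _ fun ω => by simpa using hC ω)⟩

lemma aux_comap_sm (hX : Measurable X) {g : (Fin p → ℝ) → ℝ} (hg : Measurable g) :
    StronglyMeasurable[MeasurableSpace.comap X inferInstance] (fun ω => g (X ω)) :=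
  (hg.comp (Measurable.of_comap_le le_rfl)).stronglyMeasurable

lemma aux_pullout (hX : Measurable X) {g : (Fin p → ℝ) → ℝ} (hg : Measurable g)
    {C : ℝ} (hgC : ∀ x, |g x| ≤ C) {Z : Ω → ℝ} (hZ : Integrable Z μ) :
    μ[fun ω => g (X ω) * Z ω | MeasurableSpace.comap X inferInstance]
      =ᵐ[μ] fun ω => g (X ω) * (μ[Z | MeasurableSpace.comap X inferInstance]) ω := by
  have hint : Integrable (fun ω => g (X ω) * Z ω) μ :=
    hZ.bdd_mul (c := C) ((aux_comap_sm hX hg).mono hX.comap_le).aestronglyMeasurable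
      (ae_of_all _ (fun ω => by simpa using hgC (X ω)))
  exact condExp_mul_of_stronglyMeasurable_left (aux_comap_sm hX hg) hint hZ

lemma aux_tower (hX : Measurable X) {g : (Fin p → ℝ) → ℝ} (hg : Measurable g)
    {C : ℝ} (hgC : ∀ x, |g x| ≤ C) {Z : Ω → ℝ} (hZ : Integrable Z μ) :
    ∫ ω, g (X ω) * Z ω ∂μ
      = ∫ ω, g (X ω) * (μ[Z | MeasurableSpace.comap X inferInstance]) ω ∂μ := by
  have hm := hX.comap_le
  rw [← integral_condExp hm (f := fun ω => g (X ω) * Z ω)]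
  exact integral_congr_ae (aux_pullout hX hg hgC hZ)

lemma aux_density (ν₁ ν₂ : Measure Ω) (hX : Measurable X) {w : (Fin p → ℝ) → ℝ}
    (hw : Measurable w) (hw0 : ∀ x, 0 ≤ w x)
    (hden : Measure.map X ν₁ = (Measure.map X ν₂).withDensity fun x => ENNReal.ofReal (w x))
    {f : (Fin p → ℝ) → ℝ} (hf : Measurable f) :
    ∫ ω, f (X ω) ∂ν₁ = ∫ ω, w (X ω) * f (X ω) ∂ν₂ := by
  have h1 : ∫ ω, f (X ω) ∂ν₁ = ∫ x, f x ∂(Measure.map X ν₁) :=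
    (integral_map hX.aemeasurable hf.aestronglyMeasurable).symm
  have h2 : ∫ ω, w (X ω) * f (X ω) ∂ν₂ = ∫ x, w x * f x ∂(Measure.map X ν₂) :=
    (integral_map hX.aemeasurable ((hw.mul hf).aestronglyMeasurable)).symm
  rw [h1, h2, hden]
  have he : (fun x => ENNReal.ofReal (w x)) = fun x => ((w x).toNNReal : ENNReal) := rfl
  rw [he, integral_withDensity_eq_integral_smul hw.real_toNNReal f]
  refine integral_congr_ae (ae_of_all _ fun x => ?_)
  simp [NNReal.smul_def, Real.coe_toNNReal _ (hw0 x)]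

lemma aux_ae_comp {ν : Measure Ω} (hX : Measurable X) {f g : (Fin p → ℝ) → ℝ}
    (hf : Measurable f) (hg : Measurable g)
    (h : ∀ᵐ x ∂(Measure.map X ν), f x = g x) :
    ∀ᵐ ω ∂ν, f (X ω) = g (X ω) :=
  (ae_map_iff hX.aemeasurable (measurableSet_eq_fun hf hg)).mp h

end Aux

section Target

variable {Ω : Type*} [MeasurableSpace Ω] {μ : Measure Ω} [IsProbabilityMeasure μ]
  {p : ℕ} {X : Ω → (Fin p → ℝ)}

lemma aux_target_id
    (hX : Measurable X) {A Y1 Y0 Y : Ω → ℝ} (hA : Measurable A)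
    (hA01 : ∀ ω, A ω = 0 ∨ A ω = 1)
    (hY1 : Measurable Y1) (hY0 : Measurable Y0)
    {C1 C0 : ℝ} (hY1b : ∀ ω, |Y1 ω| ≤ C1) (hY0b : ∀ ω, |Y0 ω| ≤ C0)
    (hcons : ∀ ω, Y ω = A ω * Y1 ω + (1 - A ω) * Y0 ω)
    {μ1 μ0 e : (Fin p → ℝ) → ℝ} {ε : ℝ} (hε : 0 < ε)
    (hμ1 : Measurable μ1) (hμ0 : Measurable μ0)
    {D1 D0 : ℝ} (hμ1b : ∀ x, |μ1 x| ≤ D1) (hμ0b : ∀ x, |μ0 x| ≤ D0)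
    (hor1 : μ[fun ω => A ω * (Y ω - μ1 (X ω)) | MeasurableSpace.comap X inferInstance]
        =ᵐ[μ] fun _ => (0:ℝ))
    (hor0 : μ[fun ω => (1 - A ω) * (Y ω - μ0 (X ω)) | MeasurableSpace.comap X inferInstance]
        =ᵐ[μ] fun _ => (0:ℝ))
    (heX : (fun ω => e (X ω)) =ᵐ[μ] μ[A | MeasurableSpace.comap X inferInstance])
    (hepos : ∀ᵐ ω ∂μ, ε ≤ e (X ω) ∧ e (X ω) ≤ 1 - ε)
    (hig1 : μ[fun ω => A ω * Y1 ω | MeasurableSpace.comap X inferInstance]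
      =ᵐ[μ] fun ω => e (X ω) * (μ[Y1 | MeasurableSpace.comap X inferInstance]) ω)
    (hig0 : μ[fun ω => (1 - A ω) * Y0 ω | MeasurableSpace.comap X inferInstance]
      =ᵐ[μ] fun ω => (1 - e (X ω)) * (μ[Y0 | MeasurableSpace.comap X inferInstance]) ω) :
    ∫ ω, (μ1 (X ω) - μ0 (X ω)) ∂μ = ∫ ω, (Y1 ω - Y0 ω) ∂μ := by
  have hm := hX.comap_le
  have hAb : ∀ ω, |A ω| ≤ 1 := fun ω => by rcases hA01 ω with h | h <;> rw [h] <;> norm_num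
  have hAint : Integrable A μ := aux_int hA hAb
  have h1Aint : Integrable (fun ω => 1 - A ω) μ :=
    aux_int (measurable_const.sub hA) (C := 2) (fun ω => by
      have := hAb ω; rw [abs_le] at *; constructor <;> linarith [this.1, this.2])
  have hAY1int : Integrable (fun ω => A ω * Y1 ω) μ :=
    aux_int (hA.mul hY1) (C := 1 * C1) (fun ω => by
      rw [abs_mul]; exact mul_le_mul (hAb ω) (hY1b ω) (abs_nonneg _)
        ((abs_nonneg _).trans (hAb ω)))
  have h1AY0int : Integrable (fun ω => (1 - A ω) * Y0 ω) μ :=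
    aux_int ((measurable_const.sub hA).mul hY0) (C := 2 * C0) (fun ω => by
      rw [abs_mul]
      refine mul_le_mul ?_ (hY0b ω) (abs_nonneg _) (by norm_num)
      have := hAb ω; rw [abs_le] at *; constructor <;> linarith [this.1, this.2])
  have hμ1Aint : Integrable (fun ω => μ1 (X ω) * A ω) μ :=
    hAint.bdd_mul (c := D1) ((aux_comap_sm hX hμ1).mono hm).aestronglyMeasurable
      (ae_of_all _ (fun ω => by simpa using hμ1b (X ω)))
  have hμ0Aint : Integrable (fun ω => μ0 (X ω) * (1 - A ω)) μ :=
    h1Aint.bdd_mul (c := D0) ((aux_comap_sm hX hμ0).mono hm).aestronglyMeasurable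
      (ae_of_all _ (fun ω => by simpa using hμ0b (X ω)))
  -- arm 1
  have hfun1 : (fun ω => A ω * (Y ω - μ1 (X ω)))
      = (fun ω => A ω * Y1 ω) - fun ω => μ1 (X ω) * A ω := by
    funext ω
    rcases hA01 ω with h | h <;> simp only [Pi.sub_apply] <;> rw [hcons ω, h] <;> ring
  rw [hfun1] at hor1
  have hsub1 := condExp_sub (m := MeasurableSpace.comap X inferInstance) hAY1int hμ1Aint
  have hpull1 := aux_pullout (μ := μ) hX hμ1 hμ1b hAint
  have key1 : (fun ω => μ1 (X ω)) =ᵐ[μ] μ[Y1 | MeasurableSpace.comap X inferInstance] := by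
    filter_upwards [hsub1.symm.trans hor1, hig1, hpull1, heX.symm, hepos] with ω h0 hig hpl heq
      hpos
    simp only [Pi.sub_apply, Pi.zero_apply] at h0
    have he0 : e (X ω) ≠ 0 := ne_of_gt (lt_of_lt_of_le hε hpos.1)
    have hkey : e (X ω) * (μ[Y1 | MeasurableSpace.comap X inferInstance]) ω
        = e (X ω) * μ1 (X ω) := by
      rw [hig, hpl, heq] at h0; linear_combination h0
    exact (mul_left_cancel₀ he0 hkey).symm
  -- arm 0
  have hfun0 : (fun ω => (1 - A ω) * (Y ω - μ0 (X ω)))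
      = (fun ω => (1 - A ω) * Y0 ω) - fun ω => μ0 (X ω) * (1 - A ω) := by
    funext ω
    rcases hA01 ω with h | h <;> simp only [Pi.sub_apply] <;> rw [hcons ω, h] <;> ring
  rw [hfun0] at hor0
  have hsub0 := condExp_sub (m := MeasurableSpace.comap X inferInstance) h1AY0int hμ0Aint
  have hpull0 := aux_pullout (μ := μ) hX hμ0 hμ0b h1Aint
  have hc1A : μ[(fun ω => 1 - A ω) | MeasurableSpace.comap X inferInstance]
      =ᵐ[μ] fun ω => 1 - (μ[A | MeasurableSpace.comap X inferInstance]) ω := by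
    have h := condExp_sub (m := MeasurableSpace.comap X inferInstance)
      (integrable_const (1:ℝ)) hAint
    have hc := condExp_const (μ := μ) hm (1:ℝ)
    filter_upwards [h] with ω hω
    have hfe : ((fun _ : Ω => (1:ℝ)) - A) = fun ω => 1 - A ω := rfl
    rw [← hfe, hω, Pi.sub_apply, hc]
  have key0 : (fun ω => μ0 (X ω)) =ᵐ[μ] μ[Y0 | MeasurableSpace.comap X inferInstance] := by
    filter_upwards [hsub0.symm.trans hor0, hig0, hpull0, hc1A, heX.symm, hepos] with ω h0 hig hpl
      hcA heq hpos
    simp only [Pi.sub_apply, Pi.zero_apply] at h0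
    have he0 : 1 - e (X ω) ≠ 0 := by
      have h' : ε ≤ 1 - e (X ω) := by linarith [hpos.2]
      exact ne_of_gt (lt_of_lt_of_le hε h')
    have hkey : (1 - e (X ω)) * (μ[Y0 | MeasurableSpace.comap X inferInstance]) ω
        = (1 - e (X ω)) * μ0 (X ω) := by
      rw [hig, hpl, hcA, heq] at h0; linear_combination h0
    exact (mul_left_cancel₀ he0 hkey).symm
  have hμ1Xint : Integrable (fun ω => μ1 (X ω)) μ :=
    aux_int (hμ1.comp hX) (fun ω => hμ1b (X ω))
  have hμ0Xint : Integrable (fun ω => μ0 (X ω)) μ :=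
    aux_int (hμ0.comp hX) (fun ω => hμ0b (X ω))
  have i1 : ∫ ω, μ1 (X ω) ∂μ = ∫ ω, Y1 ω ∂μ := by
    rw [integral_congr_ae key1]; exact integral_condExp hm
  have i0 : ∫ ω, μ0 (X ω) ∂μ = ∫ ω, Y0 ω ∂μ := by
    rw [integral_congr_ae key0]; exact integral_condExp hm
  rw [integral_sub hμ1Xint hμ0Xint, integral_sub (aux_int hY1 hY1b) (aux_int hY0 hY0b), i1, i0]

end Target

section MoreAux

variable {Ω : Type*} [MeasurableSpace Ω] {μ : Measure Ω} [IsProbabilityMeasure μ]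
  {p : ℕ} {X : Ω → (Fin p → ℝ)}

lemma aux_abs_mul_le {a b Ca Cb : ℝ} (ha : |a| ≤ Ca) (hb : |b| ≤ Cb) : |a * b| ≤ Ca * Cb := by
  rw [abs_mul]
  exact mul_le_mul ha hb (abs_nonneg _) ((abs_nonneg _).trans ha)

lemma aux_abs_sub_le {a b Ca Cb : ℝ} (ha : |a| ≤ Ca) (hb : |b| ≤ Cb) : |a - b| ≤ Ca + Cb :=
  (abs_sub a b).trans (add_le_add ha hb)

lemma aux_cE_one_sub (hX : Measurable X) {A : Ω → ℝ} (hAint : Integrable A μ) :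
    μ[(fun ω => 1 - A ω) | MeasurableSpace.comap X inferInstance]
      =ᵐ[μ] fun ω => 1 - (μ[A | MeasurableSpace.comap X inferInstance]) ω := by
  have hm := hX.comap_le
  have h := condExp_sub (m := MeasurableSpace.comap X inferInstance)
    (integrable_const (1:ℝ)) hAint
  have hc := condExp_const (μ := μ) hm (1:ℝ)
  filter_upwards [h] with ω hω
  have hfe : ((fun _ : Ω => (1:ℝ)) - A) = fun ω => 1 - A ω := rfl
  rw [← hfe, hω, Pi.sub_apply, hc]

end MoreAux

/-- **Double robustness of the source-site density-ratio-weighted estimator.**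
Let `Φ = E_T[m₁(X) − m₀(X)] + E_k[ω̃(X)·(A(Y−m₁(X))/π(X) − (1−A)(Y−m₀(X))/(1−π(X)))]`.
Then `Φ = E[Y¹ − Y⁰ ∣ R ∈ T]` provided either (1) the outcome regression is correct for the
target population and the source site, or (2) the propensity score and density ratio are
correct for the source site while the outcome regression is shared across sites. -/
theorem source_site_density_ratio_double_robustness
    {Ω : Type*} [MeasurableSpace Ω] (P : Measure Ω) [IsProbabilityMeasure P]
    {p : ℕ} (X : Ω → (Fin p → ℝ)) (A : Ω → ℝ) (Y1 Y0 Y : Ω → ℝ)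
    {S : Type*} [Fintype S] [MeasurableSpace S] [MeasurableSingletonClass S]
    (R : Ω → S) (T : Finset S) (k : S)
    (μ1T μ0T eT ek μ1k μ0k w π m1 m0 wt : (Fin p → ℝ) → ℝ) (ε : ℝ)
    (hX : Measurable X) (hA : Measurable A) (hA01 : ∀ ω, A ω = 0 ∨ A ω = 1)
    (hY1 : Measurable Y1) (hY0 : Measurable Y0)
    (hY1b : ∃ C, ∀ ω, |Y1 ω| ≤ C) (hY0b : ∃ C, ∀ ω, |Y0 ω| ≤ C)
    (hcons : ∀ ω, Y ω = A ω * Y1 ω + (1 - A ω) * Y0 ω)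
    (hR : Measurable R) (hkT : k ∉ T)
    (hPT : P {ω | R ω ∈ T} ≠ 0) (hPk : P {ω | R ω = k} ≠ 0)
    (hε : 0 < ε) (hε' : ε < 1 / 2)
    -- target population models
    (hμ1T : Measurable μ1T) (hμ0T : Measurable μ0T)
    (hμ1Tb : ∃ C, ∀ x, |μ1T x| ≤ C) (hμ0Tb : ∃ C, ∀ x, |μ0T x| ≤ C)
    (horT1 : (P[|{ω | R ω ∈ T}])[fun ω => A ω * (Y ω - μ1T (X ω)) |
        MeasurableSpace.comap X inferInstance] =ᵐ[P[|{ω | R ω ∈ T}]] fun _ => (0 : ℝ))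
    (horT0 : (P[|{ω | R ω ∈ T}])[fun ω => (1 - A ω) * (Y ω - μ0T (X ω)) |
        MeasurableSpace.comap X inferInstance] =ᵐ[P[|{ω | R ω ∈ T}]] fun _ => (0 : ℝ))
    (heT : Measurable eT)
    (heTX : (fun ω => eT (X ω))
      =ᵐ[P[|{ω | R ω ∈ T}]] (P[|{ω | R ω ∈ T}])[A | MeasurableSpace.comap X inferInstance])
    (heTpos : ∀ᵐ ω ∂(P[|{ω | R ω ∈ T}]), ε ≤ eT (X ω) ∧ eT (X ω) ≤ 1 - ε)
    (higT1 : (P[|{ω | R ω ∈ T}])[fun ω => A ω * Y1 ω | MeasurableSpace.comap X inferInstance]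
      =ᵐ[P[|{ω | R ω ∈ T}]] fun ω => eT (X ω) *
        ((P[|{ω | R ω ∈ T}])[Y1 | MeasurableSpace.comap X inferInstance]) ω)
    (higT0 : (P[|{ω | R ω ∈ T}])[fun ω => (1 - A ω) * Y0 ω |
        MeasurableSpace.comap X inferInstance]
      =ᵐ[P[|{ω | R ω ∈ T}]] fun ω => (1 - eT (X ω)) *
        ((P[|{ω | R ω ∈ T}])[Y0 | MeasurableSpace.comap X inferInstance]) ω)
    -- source site models
    (hek : Measurable ek)
    (hekX : (fun ω => ek (X ω))
      =ᵐ[P[|{ω | R ω = k}]] (P[|{ω | R ω = k}])[A | MeasurableSpace.comap X inferInstance])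
    (hekpos : ∀ᵐ ω ∂(P[|{ω | R ω = k}]), ε ≤ ek (X ω) ∧ ek (X ω) ≤ 1 - ε)
    (hμ1k : Measurable μ1k) (hμ0k : Measurable μ0k)
    (hμ1kb : ∃ C, ∀ x, |μ1k x| ≤ C) (hμ0kb : ∃ C, ∀ x, |μ0k x| ≤ C)
    (hork1 : (P[|{ω | R ω = k}])[fun ω => A ω * (Y ω - μ1k (X ω)) |
        MeasurableSpace.comap X inferInstance] =ᵐ[P[|{ω | R ω = k}]] fun _ => (0 : ℝ))
    (hork0 : (P[|{ω | R ω = k}])[fun ω => (1 - A ω) * (Y ω - μ0k (X ω)) |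
        MeasurableSpace.comap X inferInstance] =ᵐ[P[|{ω | R ω = k}]] fun _ => (0 : ℝ))
    -- true density ratio
    (hw : Measurable w) (hw0 : ∀ x, 0 ≤ w x) (hwb : ∃ C, ∀ x, w x ≤ C)
    (hden : Measure.map X (P[|{ω | R ω ∈ T}])
      = (Measure.map X (P[|{ω | R ω = k}])).withDensity fun x => ENNReal.ofReal (w x))
    -- working models
    (hπ : Measurable π) (hπpos : ∀ x, ε ≤ π x ∧ π x ≤ 1 - ε)
    (hm1 : Measurable m1) (hm0 : Measurable m0)
    (hm1b : ∃ C, ∀ x, |m1 x| ≤ C) (hm0b : ∃ C, ∀ x, |m0 x| ≤ C)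
    (hwt : Measurable wt) (hwt0 : ∀ x, 0 ≤ wt x) (hwtb : ∃ C, ∀ x, wt x ≤ C)
    -- double robustness: (1) outcome regressions correct for target and source, or
    -- (2) propensity score and density ratio correct for the source site, with the
    -- outcome regression shared across sites
    (hdr : ((∀ᵐ x ∂(Measure.map X (P[|{ω | R ω ∈ T}])), m1 x = μ1T x)
          ∧ (∀ᵐ x ∂(Measure.map X (P[|{ω | R ω ∈ T}])), m0 x = μ0T x)
          ∧ (∀ᵐ x ∂(Measure.map X (P[|{ω | R ω = k}])), m1 x = μ1k x)
          ∧ (∀ᵐ x ∂(Measure.map X (P[|{ω | R ω = k}])), m0 x = μ0k x))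
      ∨ ((∀ᵐ x ∂(Measure.map X (P[|{ω | R ω = k}])), π x = ek x)
          ∧ (∀ᵐ x ∂(Measure.map X (P[|{ω | R ω = k}])), wt x = w x)
          ∧ (∀ᵐ x ∂(Measure.map X (P[|{ω | R ω ∈ T}])), μ1k x = μ1T x)
          ∧ (∀ᵐ x ∂(Measure.map X (P[|{ω | R ω ∈ T}])), μ0k x = μ0T x))) :
    (∫ ω, (m1 (X ω) - m0 (X ω)) ∂(P[|{ω | R ω ∈ T}]))
      + ∫ ω, wt (X ω) * (A ω * (Y ω - m1 (X ω)) / π (X ω)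
          - (1 - A ω) * (Y ω - m0 (X ω)) / (1 - π (X ω))) ∂(P[|{ω | R ω = k}])
      = ∫ ω, (Y1 ω - Y0 ω) ∂(P[|{ω | R ω ∈ T}]) := by
  obtain ⟨C1, hC1⟩ := hY1b
  obtain ⟨C0, hC0⟩ := hY0b
  obtain ⟨D1T, hD1T⟩ := hμ1Tb
  obtain ⟨D0T, hD0T⟩ := hμ0Tb
  obtain ⟨D1k, hD1k⟩ := hμ1kb
  obtain ⟨D0k, hD0k⟩ := hμ0kb
  obtain ⟨Cw, hCw⟩ := hwb
  obtain ⟨Cm1, hCm1⟩ := hm1b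
  obtain ⟨Cm0, hCm0⟩ := hm0b
  obtain ⟨Cwt, hCwt⟩ := hwtb
  set PT := P[|{ω | R ω ∈ T}] with hPTd
  set Pk := P[|{ω | R ω = k}] with hPkd
  haveI iPT : IsProbabilityMeasure PT := cond_isProbabilityMeasure hPT
  haveI iPk : IsProbabilityMeasure Pk := cond_isProbabilityMeasure hPk
  have hm := hX.comap_le
  have hYm : Measurable Y := by
    have h : Y = fun ω => A ω * Y1 ω + (1 - A ω) * Y0 ω := funext hcons
    rw [h]; exact (hA.mul hY1).add ((measurable_const.sub hA).mul hY0)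
  have hAb : ∀ ω, |A ω| ≤ 1 := fun ω => by rcases hA01 ω with h | h <;> rw [h] <;> norm_num
  have h1Ab : ∀ ω, |1 - A ω| ≤ 2 := fun ω => by
    have := hAb ω; rw [abs_le] at *; constructor <;> linarith [this.1, this.2]
  have hYb : ∀ ω, |Y ω| ≤ |C1| + |C0| := by
    intro ω
    rcases hA01 ω with h | h <;> rw [hcons ω, h]
    · have he : (0:ℝ) * Y1 ω + (1 - 0) * Y0 ω = Y0 ω := by ring
      rw [he]
      have := (hC0 ω).trans (le_abs_self C0)
      linarith [abs_nonneg C1]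
    · have he : (1:ℝ) * Y1 ω + (1 - 1) * Y0 ω = Y1 ω := by ring
      rw [he]
      have := (hC1 ω).trans (le_abs_self C1)
      linarith [abs_nonneg C0]
  have hεπ : ∀ x, (0:ℝ) < π x := fun x => lt_of_lt_of_le hε (hπpos x).1
  have hεπ' : ∀ x, (0:ℝ) < 1 - π x := fun x =>
    lt_of_lt_of_le hε (by linarith [(hπpos x).2])
  have hZ1m : Measurable fun ω => A ω * (Y ω - m1 (X ω)) := hA.mul (hYm.sub (hm1.comp hX))
  have hZ0m : Measurable fun ω => (1 - A ω) * (Y ω - m0 (X ω)) :=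
    (measurable_const.sub hA).mul (hYm.sub (hm0.comp hX))
  have hZ1b : ∀ ω, |A ω * (Y ω - m1 (X ω))| ≤ 1 * ((|C1| + |C0|) + Cm1) := fun ω =>
    aux_abs_mul_le (hAb ω) (aux_abs_sub_le (hYb ω) (hCm1 (X ω)))
  have hZ0b : ∀ ω, |(1 - A ω) * (Y ω - m0 (X ω))| ≤ 2 * ((|C1| + |C0|) + Cm0) := fun ω =>
    aux_abs_mul_le (h1Ab ω) (aux_abs_sub_le (hYb ω) (hCm0 (X ω)))
  have hZ1int : Integrable (fun ω => A ω * (Y ω - m1 (X ω))) Pk := aux_int hZ1m hZ1b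
  have hZ0int : Integrable (fun ω => (1 - A ω) * (Y ω - m0 (X ω))) Pk := aux_int hZ0m hZ0b
  have hg1m : Measurable fun x => wt x / π x := hwt.div hπ
  have hg0m : Measurable fun x => wt x / (1 - π x) := hwt.div (measurable_const.sub hπ)
  have hg1b : ∀ x, |wt x / π x| ≤ Cwt / ε := by
    intro x
    rw [abs_div, abs_of_nonneg (hwt0 x), abs_of_pos (hεπ x)]
    exact div_le_div₀ ((hwt0 x).trans (hCwt x)) (hCwt x) hε (hπpos x).1
  have hg0b : ∀ x, |wt x / (1 - π x)| ≤ Cwt / ε := by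
    intro x
    rw [abs_div, abs_of_nonneg (hwt0 x), abs_of_pos (hεπ' x)]
    exact div_le_div₀ ((hwt0 x).trans (hCwt x)) (hCwt x) hε (by linarith [(hπpos x).2])
  have hg1Z1int : Integrable (fun ω => (wt (X ω) / π (X ω)) * (A ω * (Y ω - m1 (X ω)))) Pk :=
    hZ1int.bdd_mul (c := Cwt / ε) ((hg1m.comp hX).aestronglyMeasurable)
      (ae_of_all _ (fun ω => by rw [Real.norm_eq_abs]; exact hg1b (X ω)))
  have hg0Z0int : Integrable
      (fun ω => (wt (X ω) / (1 - π (X ω))) * ((1 - A ω) * (Y ω - m0 (X ω)))) Pk :=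
    hZ0int.bdd_mul (c := Cwt / ε) ((hg0m.comp hX).aestronglyMeasurable)
      (ae_of_all _ (fun ω => by rw [Real.norm_eq_abs]; exact hg0b (X ω)))
  have hsplit : (∫ ω, wt (X ω) * (A ω * (Y ω - m1 (X ω)) / π (X ω)
          - (1 - A ω) * (Y ω - m0 (X ω)) / (1 - π (X ω))) ∂Pk)
      = (∫ ω, (wt (X ω) / π (X ω)) * (A ω * (Y ω - m1 (X ω))) ∂Pk)
        - ∫ ω, (wt (X ω) / (1 - π (X ω))) * ((1 - A ω) * (Y ω - m0 (X ω))) ∂Pk := by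
    rw [← integral_sub hg1Z1int hg0Z0int]
    refine integral_congr_ae (ae_of_all _ fun ω => ?_)
    have h1 := (hεπ (X ω)).ne'
    have h2 := (hεπ' (X ω)).ne'
    field_simp
  have tow1 : (∫ ω, (wt (X ω) / π (X ω)) * (A ω * (Y ω - m1 (X ω))) ∂Pk)
      = ∫ ω, (wt (X ω) / π (X ω)) * ((Pk[fun ω => A ω * (Y ω - m1 (X ω)) |
          MeasurableSpace.comap X inferInstance]) ω) ∂Pk :=
    aux_tower hX hg1m hg1b hZ1int
  have tow0 : (∫ ω, (wt (X ω) / (1 - π (X ω))) * ((1 - A ω) * (Y ω - m0 (X ω))) ∂Pk)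
      = ∫ ω, (wt (X ω) / (1 - π (X ω))) * ((Pk[fun ω => (1 - A ω) * (Y ω - m0 (X ω)) |
          MeasurableSpace.comap X inferInstance]) ω) ∂Pk :=
    aux_tower hX hg0m hg0b hZ0int
  have hAintk : Integrable A Pk := aux_int hA hAb
  have h1Aintk : Integrable (fun ω => 1 - A ω) Pk := aux_int (measurable_const.sub hA) h1Ab
  have hres1m : Measurable fun ω => A ω * (Y ω - μ1k (X ω)) :=
    hA.mul (hYm.sub (hμ1k.comp hX))
  have hres0m : Measurable fun ω => (1 - A ω) * (Y ω - μ0k (X ω)) :=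
    (measurable_const.sub hA).mul (hYm.sub (hμ0k.comp hX))
  have hres1int : Integrable (fun ω => A ω * (Y ω - μ1k (X ω))) Pk :=
    aux_int hres1m (C := 1 * ((|C1| + |C0|) + D1k))
      (fun ω => aux_abs_mul_le (hAb ω) (aux_abs_sub_le (hYb ω) (hD1k (X ω))))
  have hres0int : Integrable (fun ω => (1 - A ω) * (Y ω - μ0k (X ω))) Pk :=
    aux_int hres0m (C := 2 * ((|C1| + |C0|) + D0k))
      (fun ω => aux_abs_mul_le (h1Ab ω) (aux_abs_sub_le (hYb ω) (hD0k (X ω))))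
  have hdiff1b : ∀ x, |μ1k x - m1 x| ≤ D1k + Cm1 := fun x =>
    aux_abs_sub_le (hD1k x) (hCm1 x)
  have hdiff0b : ∀ x, |μ0k x - m0 x| ≤ D0k + Cm0 := fun x =>
    aux_abs_sub_le (hD0k x) (hCm0 x)
  have hdiff1A : Integrable (fun ω => (μ1k (X ω) - m1 (X ω)) * A ω) Pk :=
    hAintk.bdd_mul (c := D1k + Cm1) (((hμ1k.sub hm1).comp hX).aestronglyMeasurable)
      (ae_of_all _ (fun ω => by simpa using hdiff1b (X ω)))
  have hdiff0A : Integrable (fun ω => (μ0k (X ω) - m0 (X ω)) * (1 - A ω)) Pk :=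
    h1Aintk.bdd_mul (c := D0k + Cm0) (((hμ0k.sub hm0).comp hX).aestronglyMeasurable)
      (ae_of_all _ (fun ω => by simpa using hdiff0b (X ω)))
  have hcE1 : (Pk[fun ω => A ω * (Y ω - m1 (X ω)) | MeasurableSpace.comap X inferInstance])
      =ᵐ[Pk] fun ω => (μ1k (X ω) - m1 (X ω)) * ek (X ω) := by
    have hf : (fun ω => A ω * (Y ω - m1 (X ω)))
        = (fun ω => A ω * (Y ω - μ1k (X ω))) + fun ω => (μ1k (X ω) - m1 (X ω)) * A ω := by
      funext ω; simp only [Pi.add_apply]; ring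
    rw [hf]
    have hadd := condExp_add (m := MeasurableSpace.comap X inferInstance) hres1int hdiff1A
    have hpull := aux_pullout (μ := Pk) hX (hμ1k.sub hm1) hdiff1b hAintk
    filter_upwards [hadd, hork1, hpull, hekX] with ω ha h0 hp he
    have ha' : (Pk[(fun ω => A ω * (Y ω - μ1k (X ω)))
          + fun ω => (μ1k (X ω) - m1 (X ω)) * A ω | MeasurableSpace.comap X inferInstance]) ω
        = (Pk[fun ω => A ω * (Y ω - μ1k (X ω)) | MeasurableSpace.comap X inferInstance]) ω
          + (Pk[fun ω => (μ1k (X ω) - m1 (X ω)) * A ω |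
              MeasurableSpace.comap X inferInstance]) ω := ha
    have h0' : (Pk[fun ω => A ω * (Y ω - μ1k (X ω)) |
        MeasurableSpace.comap X inferInstance]) ω = 0 := h0
    have hp' : (Pk[fun ω => (μ1k (X ω) - m1 (X ω)) * A ω |
          MeasurableSpace.comap X inferInstance]) ω
        = (μ1k (X ω) - m1 (X ω)) * (Pk[A | MeasurableSpace.comap X inferInstance]) ω := hp
    have he' : ek (X ω) = (Pk[A | MeasurableSpace.comap X inferInstance]) ω := he
    rw [ha', h0', hp', ← he']
    exact zero_add _
  have hcE0 : (Pk[fun ω => (1 - A ω) * (Y ω - m0 (X ω)) |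
        MeasurableSpace.comap X inferInstance])
      =ᵐ[Pk] fun ω => (μ0k (X ω) - m0 (X ω)) * (1 - ek (X ω)) := by
    have hf : (fun ω => (1 - A ω) * (Y ω - m0 (X ω)))
        = (fun ω => (1 - A ω) * (Y ω - μ0k (X ω)))
          + fun ω => (μ0k (X ω) - m0 (X ω)) * (1 - A ω) := by
      funext ω; simp only [Pi.add_apply]; ring
    rw [hf]
    have hadd := condExp_add (m := MeasurableSpace.comap X inferInstance) hres0int hdiff0A
    have hpull := aux_pullout (μ := Pk) hX (hμ0k.sub hm0) hdiff0b h1Aintk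
    have hone := aux_cE_one_sub (μ := Pk) hX hAintk
    filter_upwards [hadd, hork0, hpull, hone, hekX] with ω ha h0 hp h1 he
    have ha' : (Pk[(fun ω => (1 - A ω) * (Y ω - μ0k (X ω)))
          + fun ω => (μ0k (X ω) - m0 (X ω)) * (1 - A ω) |
          MeasurableSpace.comap X inferInstance]) ω
        = (Pk[fun ω => (1 - A ω) * (Y ω - μ0k (X ω)) |
            MeasurableSpace.comap X inferInstance]) ω
          + (Pk[fun ω => (μ0k (X ω) - m0 (X ω)) * (1 - A ω) |
              MeasurableSpace.comap X inferInstance]) ω := ha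
    have h0' : (Pk[fun ω => (1 - A ω) * (Y ω - μ0k (X ω)) |
        MeasurableSpace.comap X inferInstance]) ω = 0 := h0
    have hp' : (Pk[fun ω => (μ0k (X ω) - m0 (X ω)) * (1 - A ω) |
          MeasurableSpace.comap X inferInstance]) ω
        = (μ0k (X ω) - m0 (X ω))
          * (Pk[fun ω => 1 - A ω | MeasurableSpace.comap X inferInstance]) ω := hp
    have h1' : (Pk[fun ω => 1 - A ω | MeasurableSpace.comap X inferInstance]) ω
        = 1 - (Pk[A | MeasurableSpace.comap X inferInstance]) ω := h1
    have he' : ek (X ω) = (Pk[A | MeasurableSpace.comap X inferInstance]) ω := he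
    rw [ha', h0', hp', h1', ← he']
    exact zero_add _
  have htarget : ∫ ω, (μ1T (X ω) - μ0T (X ω)) ∂PT = ∫ ω, (Y1 ω - Y0 ω) ∂PT :=
    aux_target_id hX hA hA01 hY1 hY0 hC1 hC0 hcons hε hμ1T hμ0T hD1T hD0T
      horT1 horT0 heTX heTpos higT1 higT0
  rw [hsplit, tow1, tow0]
  rcases hdr with ⟨h1T, h0T, h1k, h0k⟩ | ⟨hπk, hwtk, h1Tk, h0Tk⟩
  · have a1 : ∀ᵐ ω ∂Pk, m1 (X ω) = μ1k (X ω) := aux_ae_comp hX hm1 hμ1k h1k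
    have a0 : ∀ᵐ ω ∂Pk, m0 (X ω) = μ0k (X ω) := aux_ae_comp hX hm0 hμ0k h0k
    have b1 : ∀ᵐ ω ∂PT, m1 (X ω) = μ1T (X ω) := aux_ae_comp hX hm1 hμ1T h1T
    have b0 : ∀ᵐ ω ∂PT, m0 (X ω) = μ0T (X ω) := aux_ae_comp hX hm0 hμ0T h0T
    have e1 : (∫ ω, (wt (X ω) / π (X ω)) * ((Pk[fun ω => A ω * (Y ω - m1 (X ω)) |
          MeasurableSpace.comap X inferInstance]) ω) ∂Pk) = 0 := by
      have h : (∫ ω, (wt (X ω) / π (X ω)) * ((Pk[fun ω => A ω * (Y ω - m1 (X ω)) |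
          MeasurableSpace.comap X inferInstance]) ω) ∂Pk) = ∫ _, (0:ℝ) ∂Pk := by
        refine integral_congr_ae ?_
        filter_upwards [hcE1, a1] with ω h ha
        have h' : (Pk[fun ω => A ω * (Y ω - m1 (X ω)) |
            MeasurableSpace.comap X inferInstance]) ω
            = (μ1k (X ω) - m1 (X ω)) * ek (X ω) := h
        rw [h', ha]; ring
      rw [h, integral_zero]
    have e0 : (∫ ω, (wt (X ω) / (1 - π (X ω)))
          * ((Pk[fun ω => (1 - A ω) * (Y ω - m0 (X ω)) |
          MeasurableSpace.comap X inferInstance]) ω) ∂Pk) = 0 := by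
      have h : (∫ ω, (wt (X ω) / (1 - π (X ω)))
          * ((Pk[fun ω => (1 - A ω) * (Y ω - m0 (X ω)) |
          MeasurableSpace.comap X inferInstance]) ω) ∂Pk) = ∫ _, (0:ℝ) ∂Pk := by
        refine integral_congr_ae ?_
        filter_upwards [hcE0, a0] with ω h ha
        have h' : (Pk[fun ω => (1 - A ω) * (Y ω - m0 (X ω)) |
            MeasurableSpace.comap X inferInstance]) ω
            = (μ0k (X ω) - m0 (X ω)) * (1 - ek (X ω)) := h
        rw [h', ha]; ring
      rw [h, integral_zero]
    have efirst : (∫ ω, (m1 (X ω) - m0 (X ω)) ∂PT) = ∫ ω, (μ1T (X ω) - μ0T (X ω)) ∂PT := by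
      refine integral_congr_ae ?_
      filter_upwards [b1, b0] with ω h1 h0
      rw [h1, h0]
    rw [e1, e0, efirst, htarget]; ring
  · have a1 : ∀ᵐ ω ∂Pk, π (X ω) = ek (X ω) := aux_ae_comp hX hπ hek hπk
    have a2 : ∀ᵐ ω ∂Pk, wt (X ω) = w (X ω) := aux_ae_comp hX hwt hw hwtk
    have b1 : ∀ᵐ ω ∂PT, μ1k (X ω) = μ1T (X ω) := aux_ae_comp hX hμ1k hμ1T h1Tk
    have b0 : ∀ᵐ ω ∂PT, μ0k (X ω) = μ0T (X ω) := aux_ae_comp hX hμ0k hμ0T h0Tk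
    have e1 : (∫ ω, (wt (X ω) / π (X ω)) * ((Pk[fun ω => A ω * (Y ω - m1 (X ω)) |
          MeasurableSpace.comap X inferInstance]) ω) ∂Pk)
        = ∫ ω, w (X ω) * (μ1k (X ω) - m1 (X ω)) ∂Pk := by
      refine integral_congr_ae ?_
      filter_upwards [hcE1, a1, a2, hekpos] with ω h hp hw' hpos
      have h' : (Pk[fun ω => A ω * (Y ω - m1 (X ω)) |
          MeasurableSpace.comap X inferInstance]) ω
          = (μ1k (X ω) - m1 (X ω)) * ek (X ω) := h
      rw [h', hp, hw']
      have hk0 : ek (X ω) ≠ 0 := ne_of_gt (lt_of_lt_of_le hε hpos.1)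
      field_simp
    have e0 : (∫ ω, (wt (X ω) / (1 - π (X ω)))
          * ((Pk[fun ω => (1 - A ω) * (Y ω - m0 (X ω)) |
          MeasurableSpace.comap X inferInstance]) ω) ∂Pk)
        = ∫ ω, w (X ω) * (μ0k (X ω) - m0 (X ω)) ∂Pk := by
      refine integral_congr_ae ?_
      filter_upwards [hcE0, a1, a2, hekpos] with ω h hp hw' hpos
      have h' : (Pk[fun ω => (1 - A ω) * (Y ω - m0 (X ω)) |
          MeasurableSpace.comap X inferInstance]) ω
          = (μ0k (X ω) - m0 (X ω)) * (1 - ek (X ω)) := h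
      rw [h', hp, hw']
      have hk0 : 1 - ek (X ω) ≠ 0 := by
        have hle : ε ≤ 1 - ek (X ω) := by linarith [hpos.2]
        exact ne_of_gt (lt_of_lt_of_le hε hle)
      field_simp
    have d1 : (∫ ω, w (X ω) * (μ1k (X ω) - m1 (X ω)) ∂Pk)
        = ∫ ω, (μ1k (X ω) - m1 (X ω)) ∂PT :=
      (aux_density PT Pk hX hw hw0 hden (hμ1k.sub hm1)).symm
    have d0 : (∫ ω, w (X ω) * (μ0k (X ω) - m0 (X ω)) ∂Pk)
        = ∫ ω, (μ0k (X ω) - m0 (X ω)) ∂PT :=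
      (aux_density PT Pk hX hw hw0 hden (hμ0k.sub hm0)).symm
    rw [e1, e0, d1, d0]
    have i_m1 : Integrable (fun ω => m1 (X ω)) PT :=
      aux_int (hm1.comp hX) (fun ω => hCm1 (X ω))
    have i_m0 : Integrable (fun ω => m0 (X ω)) PT :=
      aux_int (hm0.comp hX) (fun ω => hCm0 (X ω))
    have i_k1 : Integrable (fun ω => μ1k (X ω)) PT :=
      aux_int (hμ1k.comp hX) (fun ω => hD1k (X ω))
    have i_k0 : Integrable (fun ω => μ0k (X ω)) PT :=
      aux_int (hμ0k.comp hX) (fun ω => hD0k (X ω))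
    have s1 : (∫ ω, (m1 (X ω) - m0 (X ω)) ∂PT)
        = (∫ ω, m1 (X ω) ∂PT) - ∫ ω, m0 (X ω) ∂PT := integral_sub i_m1 i_m0
    have s2 : (∫ ω, (μ1k (X ω) - m1 (X ω)) ∂PT)
        = (∫ ω, μ1k (X ω) ∂PT) - ∫ ω, m1 (X ω) ∂PT := integral_sub i_k1 i_m1
    have s3 : (∫ ω, (μ0k (X ω) - m0 (X ω)) ∂PT)
        = (∫ ω, μ0k (X ω) ∂PT) - ∫ ω, m0 (X ω) ∂PT := integral_sub i_k0 i_m0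
    have s4 : (∫ ω, (μ1k (X ω) - μ0k (X ω)) ∂PT)
        = (∫ ω, μ1k (X ω) ∂PT) - ∫ ω, μ0k (X ω) ∂PT := integral_sub i_k1 i_k0
    have efin : (∫ ω, (μ1k (X ω) - μ0k (X ω)) ∂PT)
        = ∫ ω, (μ1T (X ω) - μ0T (X ω)) ∂PT := by
      refine integral_congr_ae ?_
      filter_upwards [b1, b0] with ω hb1 hb0
      rw [hb1, hb0]
    rw [s1, s2, s3]
    linarith [s4, efin, htarget]
end
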